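/- arXiv:1608.02600 — 6 statements merged into one kernel-verified Lean document; each statement's English description precedes it below -/
import Mathlib

section
/- Let $u$ and $v$ be unitary operators on a finite-dimensional Hilbert space and let $\alpha = p/q$ with $p, q$ coprime positive integers. If $uv = e^{2\pi i \alpha} vu$, then the dimension of the Hilbert space is a multiple of $q$. -/
open scoped Matrix

/-- **Finite-dimensional Stone–von Neumann theorem.**
If unitaries `u, v` on an `n`-dimensional Hilbert space exactly twisted
commute, `u * v = e^{2πi p/q} • (v * u)` with `p, q` coprime, then `q ∣ n`. -/
theorem stmt_0 (n p q : ℕ) (hp : 0 < p) (hq : 0 < q) (hpq : Nat.Coprime p q)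
    (u v : Matrix.unitaryGroup (Fin n) ℂ)
    (h : (u : Matrix (Fin n) (Fin n) ℂ) * v =
      Complex.exp (2 * Real.pi * Complex.I * (p / q)) •
        ((v : Matrix (Fin n) (Fin n) ℂ) * u)) :
    q ∣ n := by
  set ω : ℂ := Complex.exp (2 * Real.pi * Complex.I * (p / q)) with hω
  have hdet := congrArg Matrix.det h
  rw [Matrix.det_mul, Matrix.det_smul, Matrix.det_mul, Fintype.card_fin] at hdet
  have hu : (u : Matrix (Fin n) (Fin n) ℂ).det ≠ 0 := by
    have := Matrix.det_of_mem_unitary u.2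
    rw [Unitary.mem_iff] at this
    exact fun hzero => by simp [hzero] at this
  have hv : (v : Matrix (Fin n) (Fin n) ℂ).det ≠ 0 := by
    have := Matrix.det_of_mem_unitary v.2
    rw [Unitary.mem_iff] at this
    exact fun hzero => by simp [hzero] at this
  have hωn : ω ^ n = 1 := by
    have : (u : Matrix (Fin n) (Fin n) ℂ).det * (v : Matrix (Fin n) (Fin n) ℂ).det ≠ 0 :=
      mul_ne_zero hu hv
    have h2 : (u : Matrix (Fin n) (Fin n) ℂ).det * (v : Matrix (Fin n) (Fin n) ℂ).det * 1 =
        (u : Matrix (Fin n) (Fin n) ℂ).det * (v : Matrix (Fin n) (Fin n) ℂ).det * (ω ^ n) := by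
      rw [mul_one]; conv_lhs => rw [hdet]
      ring
    exact (mul_left_cancel₀ this h2).symm
  have hexp : Complex.exp ((n : ℂ) * (2 * Real.pi * Complex.I * (p / q))) = 1 := by
    rw [Complex.exp_nat_mul]; exact hωn
  rw [Complex.exp_eq_one_iff] at hexp
  obtain ⟨k, hk⟩ := hexp
  have hπI : (2 : ℂ) * Real.pi * Complex.I ≠ 0 := by
    simp [Real.pi_ne_zero, Complex.I_ne_zero]
  have hq0 : (q : ℂ) ≠ 0 := Nat.cast_ne_zero.mpr hq.ne'
  have hkey : (n : ℂ) * p = k * q := by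
    have h1 : (n : ℂ) * (2 * Real.pi * Complex.I * (p / q)) = k * (2 * Real.pi * Complex.I) := hk
    field_simp at h1
    have := mul_right_cancel₀ hπI (by linear_combination (2 * Real.pi * Complex.I) * h1 :
      ((n : ℂ) * p) * (2 * Real.pi * Complex.I) = (k * q) * (2 * Real.pi * Complex.I))
    exact this
  have hint : (n : ℤ) * p = k * q := by
    exact_mod_cast hkey
  have hdvd : (q : ℤ) ∣ (n : ℤ) * p := ⟨k, by linarith⟩
  have : q ∣ n * p := Int.ofNat_dvd.mp (by exact_mod_cast hdvd)
  exact (Nat.Coprime.dvd_of_dvd_mul_right hpq.symm this)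
end

section
/- Let $H$ be a self-adjoint operator with $H\Pi = 0$ and $H^2 \geq \Delta^2 \bar\Pi$, where $\Pi$ is the orthogonal projector onto the (finite-dimensional) ground space, $\bar\Pi = I - \Pi$, and $\Delta > 0$. If $U$ is a unitary with $\|[H,U]\| \leq \epsilon$ (operator norm), then $\|\bar\Pi U \Pi + \Pi U \bar\Pi\| \leq \epsilon/\Delta$. -/
open scoped Matrix Matrix.Norms.L2Operator ComplexOrder

noncomputable def en (n : ℕ) (v : Fin n → ℂ) : ℝ := ‖(WithLp.equiv 2 (Fin n → ℂ)).symm v‖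

lemma en_nonneg (n : ℕ) (v : Fin n → ℂ) : 0 ≤ en n v := norm_nonneg _

lemma en_sq (n : ℕ) (v : Fin n → ℂ) : en n v ^ 2 = (dotProduct (star v) v).re := by
  rw [en, ← @inner_self_eq_norm_sq ℂ, PiLp.inner_apply]
  change Complex.re _ = Complex.re _
  congr 1
  simp only [dotProduct]
  apply Finset.sum_congr rfl
  intro i _
  simp only [RCLike.inner_apply, WithLp.equiv_symm_apply, PiLp.toLp_apply, Pi.star_apply, mul_comm]
  rfl

lemma en_mulVec_le (n : ℕ) (A : Matrix (Fin n) (Fin n) ℂ) (v : Fin n → ℂ) :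
    en n (A *ᵥ v) ≤ ‖A‖ * en n v :=
  A.l2_opNorm_mulVec ((WithLp.equiv 2 (Fin n → ℂ)).symm v)

lemma opNorm_le_of_en (n : ℕ) (A : Matrix (Fin n) (Fin n) ℂ) (c : ℝ) (hc : 0 ≤ c)
    (h : ∀ v : Fin n → ℂ, en n (A *ᵥ v) ≤ c * en n v) : ‖A‖ ≤ c := by
  rw [Matrix.l2_opNorm_def]
  apply ContinuousLinearMap.opNorm_le_bound _ hc
  intro x
  exact h (WithLp.equiv 2 (Fin n → ℂ) x)

lemma quad' (n : ℕ) (M : Matrix (Fin n) (Fin n) ℂ) (x : Fin n → ℂ) :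
    dotProduct (star x) ((Mᴴ * M) *ᵥ x)
      = dotProduct (star (M *ᵥ x)) (M *ᵥ x) := by
  rw [← Matrix.mulVec_mulVec, Matrix.dotProduct_mulVec, Matrix.star_mulVec]

lemma quad (n : ℕ) (M : Matrix (Fin n) (Fin n) ℂ) (hM : M.IsHermitian) (x : Fin n → ℂ) :
    dotProduct (star x) ((M * M) *ᵥ x)
      = dotProduct (star (M *ᵥ x)) (M *ᵥ x) := by
  rw [show M * M = Mᴴ * M by rw [hM.eq]]
  exact quad' n M x

lemma quad_re (n : ℕ) (M : Matrix (Fin n) (Fin n) ℂ) (hM : M.IsHermitian) (x : Fin n → ℂ) :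
    (dotProduct (star x) ((M * M) *ᵥ x)).re = en n (M *ᵥ x) ^ 2 := by
  rw [quad n M hM x, en_sq]

lemma dot_zero_of (n : ℕ) (M N : Matrix (Fin n) (Fin n) ℂ) (h : Mᴴ * N = 0)
    (x y : Fin n → ℂ) :
    dotProduct (star (M *ᵥ x)) (N *ᵥ y) = 0 := by
  rw [Matrix.star_mulVec, Matrix.dotProduct_mulVec, Matrix.vecMul_vecMul, h,
    Matrix.vecMul_zero, zero_dotProduct]

lemma gap_vec (n : ℕ) (H Q : Matrix (Fin n) (Fin n) ℂ) (Δ : ℝ) (hΔ : 0 < Δ)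
    (hH : H.IsHermitian) (hQ : Q.IsHermitian) (hQQ : Q * Q = Q)
    (hgap : (H * H - (Δ ^ 2 : ℝ) • Q).PosSemidef) (x : Fin n → ℂ) :
    Δ * en n (Q *ᵥ x) ≤ en n (H *ᵥ x) := by
  have h0 := hgap.dotProduct_mulVec_nonneg x
  rw [Complex.le_def] at h0
  have h1 : Δ ^ 2 * en n (Q *ᵥ x) ^ 2 ≤ en n (H *ᵥ x) ^ 2 := by
    have := h0.1
    rw [Matrix.sub_mulVec, dotProduct_sub, Complex.sub_re, quad_re n H hH x] at this
    rw [Matrix.smul_mulVec, dotProduct_smul] at this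
    have h2 : ((Δ ^ 2 : ℝ) • dotProduct (star x) (Q *ᵥ x)).re
        = Δ ^ 2 * en n (Q *ᵥ x) ^ 2 := by
      have h3 : dotProduct (star x) (Q *ᵥ x)
          = dotProduct (star (Q *ᵥ x)) (Q *ᵥ x) := by
        conv_lhs => rw [← hQQ]
        exact quad n Q hQ x
      rw [Complex.smul_re, h3, ← en_sq]
      rw [smul_eq_mul]
    rw [h2] at this
    simp only [Complex.zero_re] at this
    linarith
  have key : (Δ * en n (Q *ᵥ x)) ^ 2 ≤ en n (H *ᵥ x) ^ 2 := by
    rw [mul_pow]; exact h1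
  exact (pow_le_pow_iff_left₀ (mul_nonneg hΔ.le (en_nonneg _ _)) (en_nonneg _ _)
    two_ne_zero).mp key

lemma pythag (n : ℕ) (P : Matrix (Fin n) (Fin n) ℂ) (hP : P.IsHermitian) (hPP : P * P = P)
    (x : Fin n → ℂ) :
    en n (P *ᵥ x) ^ 2 + en n ((1 - P) *ᵥ x) ^ 2 = en n x ^ 2 := by
  have hQ : (1 - P : Matrix (Fin n) (Fin n) ℂ).IsHermitian := (Matrix.isHermitian_one).sub hP
  have hQQ : (1 - P : Matrix (Fin n) (Fin n) ℂ) * (1 - P) = 1 - P := by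
    noncomm_ring [hPP]
  rw [← quad_re n P hP x, ← quad_re n (1 - P) hQ x, hPP, hQQ, en_sq]
  rw [← Complex.add_re, ← dotProduct_add, ← Matrix.add_mulVec]
  norm_num

lemma en_P_le (n : ℕ) (P : Matrix (Fin n) (Fin n) ℂ) (hP : P.IsHermitian) (hPP : P * P = P)
    (x : Fin n → ℂ) : en n (P *ᵥ x) ≤ en n x := by
  have h : en n (P *ᵥ x) ^ 2 ≤ en n x ^ 2 := by
    rw [← pythag n P hP hPP x]
    nlinarith [en_nonneg n ((1 - P) *ᵥ x)]
  exact (pow_le_pow_iff_left₀ (en_nonneg _ _) (en_nonneg _ _) two_ne_zero).mp h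

lemma blockBound (n : ℕ) (H P V : Matrix (Fin n) (Fin n) ℂ) (Δ ε : ℝ) (hΔ : 0 < Δ)
    (hε : 0 ≤ ε)
    (hH : H.IsHermitian) (hP : P.IsHermitian) (hPP : P * P = P)
    (hker : H * P = 0)
    (hgap : (H * H - (Δ ^ 2 : ℝ) • (1 - P)).PosSemidef)
    (hcomm : ‖H * V - V * H‖ ≤ ε) :
    ‖(1 - P) * V * P‖ ≤ ε / Δ := by
  have hQ : (1 - P : Matrix (Fin n) (Fin n) ℂ).IsHermitian := (Matrix.isHermitian_one).sub hP
  have hQQ : (1 - P : Matrix (Fin n) (Fin n) ℂ) * (1 - P) = 1 - P := by noncomm_ring [hPP]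
  apply opNorm_le_of_en n _ _ (div_nonneg hε hΔ.le)
  intro v
  have key : H * (V * P) = (H * V - V * H) * P := by
    rw [sub_mul, mul_assoc V H P, hker, mul_zero, sub_zero, mul_assoc]
  have e1 : ((1 - P) * V * P) *ᵥ v = (1 - P) *ᵥ ((V * P) *ᵥ v) := by
    rw [mul_assoc, ← Matrix.mulVec_mulVec]
  have e2 : H *ᵥ ((V * P) *ᵥ v) = (H * V - V * H) *ᵥ (P *ᵥ v) := by
    rw [Matrix.mulVec_mulVec, key, ← Matrix.mulVec_mulVec]
  have chain : Δ * en n (((1 - P) * V * P) *ᵥ v) ≤ ε * en n v := by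
    calc Δ * en n (((1 - P) * V * P) *ᵥ v)
        = Δ * en n ((1 - P) *ᵥ ((V * P) *ᵥ v)) := by rw [e1]
      _ ≤ en n (H *ᵥ ((V * P) *ᵥ v)) := gap_vec n H (1 - P) Δ hΔ hH hQ hQQ hgap _
      _ = en n ((H * V - V * H) *ᵥ (P *ᵥ v)) := by rw [e2]
      _ ≤ ‖H * V - V * H‖ * en n (P *ᵥ v) := en_mulVec_le n _ _
      _ ≤ ε * en n v :=
          mul_le_mul hcomm (en_P_le n P hP hPP v) (en_nonneg _ _) hε
  rw [div_mul_eq_mul_div, le_div_iff₀ hΔ, mul_comm _ Δ]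
  exact chain

set_option maxHeartbeats 1000000 in
/-- Small off-diagonal blocks: if `H P = 0`, `H² ≥ Δ² (1 - P)` for the orthogonal ground
space projector `P`, and `‖[H,U]‖ ≤ ε` for a unitary `U`, then
`‖(1-P) U P + P U (1-P)‖ ≤ ε / Δ` in the operator norm. -/
theorem stmt_2 (n : ℕ) (H P : Matrix (Fin n) (Fin n) ℂ) (Δ ε : ℝ) (hΔ : 0 < Δ)
    (hH : H.IsHermitian) (hPherm : P.IsHermitian) (hPproj : P * P = P)
    (hker : H * P = 0)
    (hgap : (H * H - (Δ ^ 2 : ℝ) • (1 - P)).PosSemidef)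
    (U : Matrix.unitaryGroup (Fin n) ℂ)
    (hcomm : ‖H * (U : Matrix (Fin n) (Fin n) ℂ) - (U : Matrix (Fin n) (Fin n) ℂ) * H‖ ≤ ε) :
    ‖(1 - P) * (U : Matrix (Fin n) (Fin n) ℂ) * P +
        P * (U : Matrix (Fin n) (Fin n) ℂ) * (1 - P)‖ ≤ ε / Δ := by
  set U' : Matrix (Fin n) (Fin n) ℂ := (U : Matrix (Fin n) (Fin n) ℂ) with hU'
  have hε : 0 ≤ ε := le_trans (norm_nonneg _) hcomm
  have hQ : (1 - P : Matrix (Fin n) (Fin n) ℂ).IsHermitian := (Matrix.isHermitian_one).sub hPherm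
  have hQQ : (1 - P : Matrix (Fin n) (Fin n) ℂ) * (1 - P) = 1 - P := by noncomm_ring [hPproj]
  have hQP : (1 - P : Matrix (Fin n) (Fin n) ℂ) * P = 0 := by
    rw [sub_mul, one_mul, hPproj, sub_self]
  have hPQ : P * (1 - P : Matrix (Fin n) (Fin n) ℂ) = 0 := by
    rw [mul_sub, mul_one, hPproj, sub_self]
  -- unitarity
  have hU1 : U'ᴴ * U' = 1 := by
    have := U.2.1
    rwa [Matrix.star_eq_conjTranspose] at this
  have hU2 : U' * U'ᴴ = 1 := by
    have := U.2.2
    rwa [Matrix.star_eq_conjTranspose] at this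
  -- norm of U'ᴴ
  have hUnorm : ‖U'ᴴ‖ ≤ 1 := by
    apply opNorm_le_of_en n _ 1 zero_le_one
    intro v
    have h2 : en n (U'ᴴ *ᵥ v) ^ 2 = en n v ^ 2 := by
      rw [en_sq, en_sq, ← quad' n U'ᴴ v, Matrix.conjTranspose_conjTranspose, hU2,
        Matrix.one_mulVec]
    have := (pow_le_pow_iff_left₀ (en_nonneg _ _) (en_nonneg _ _) two_ne_zero).mp h2.le
    simpa using this
  -- commutator with U'ᴴ
  have hcomm2 : ‖H * U'ᴴ - U'ᴴ * H‖ ≤ ε := by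
    have hid : H * U'ᴴ - U'ᴴ * H = -(U'ᴴ * (H * U' - U' * H) * U'ᴴ) := by
      have expand : U'ᴴ * (H * U' - U' * H) * U'ᴴ
          = U'ᴴ * H * (U' * U'ᴴ) - (U'ᴴ * U') * (H * U'ᴴ) := by noncomm_ring
      rw [expand, hU2, hU1, mul_one, one_mul, neg_sub]
    rw [hid, norm_neg]
    calc ‖U'ᴴ * (H * U' - U' * H) * U'ᴴ‖
        ≤ ‖U'ᴴ * (H * U' - U' * H)‖ * ‖U'ᴴ‖ := Matrix.l2_opNorm_mul _ _
      _ ≤ (‖U'ᴴ‖ * ‖H * U' - U' * H‖) * ‖U'ᴴ‖ := by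
          have := Matrix.l2_opNorm_mul U'ᴴ (H * U' - U' * H)
          exact mul_le_mul_of_nonneg_right this (norm_nonneg _)
      _ ≤ (1 * ε) * 1 := by
          apply mul_le_mul _ hUnorm (norm_nonneg _) (by positivity)
          exact mul_le_mul hUnorm hcomm (norm_nonneg _) zero_le_one
      _ = ε := by ring
  -- block norms
  have hA : ‖(1 - P) * U' * P‖ ≤ ε / Δ :=
    blockBound n H P U' Δ ε hΔ hε hH hPherm hPproj hker hgap hcomm
  have hB0 : ‖(1 - P) * U'ᴴ * P‖ ≤ ε / Δ :=
    blockBound n H P U'ᴴ Δ ε hΔ hε hH hPherm hPproj hker hgap hcomm2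
  have hBeq : ((1 - P) * U'ᴴ * P)ᴴ = P * U' * (1 - P) := by
    rw [Matrix.conjTranspose_mul, Matrix.conjTranspose_mul, hPherm.eq, hQ.eq,
      Matrix.conjTranspose_conjTranspose, mul_assoc]
  have hB : ‖P * U' * (1 - P)‖ ≤ ε / Δ := by
    rw [← hBeq, Matrix.l2_opNorm_conjTranspose]
    exact hB0
  -- combine
  apply opNorm_le_of_en n _ _ (div_nonneg hε hΔ.le)
  intro v
  set A : Matrix (Fin n) (Fin n) ℂ := (1 - P) * U' * P with hAdef
  set B : Matrix (Fin n) (Fin n) ℂ := P * U' * (1 - P) with hBdef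
  have hAP : A * P = A := by rw [hAdef, mul_assoc ((1 - P) * U') P P, hPproj]
  have hBQ : B * (1 - P) = B := by rw [hBdef, mul_assoc (P * U') (1 - P) (1 - P), hQQ]
  have hAB : Aᴴ * B = 0 := by
    rw [hAdef, hBdef, Matrix.conjTranspose_mul, Matrix.conjTranspose_mul, hPherm.eq, hQ.eq]
    calc P * (U'ᴴ * (1 - P)) * (P * U' * (1 - P))
        = P * U'ᴴ * ((1 - P) * P) * (U' * (1 - P)) := by noncomm_ring
      _ = 0 := by rw [hQP, mul_zero, zero_mul]
  have hBA : Bᴴ * A = 0 := by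
    rw [hAdef, hBdef, Matrix.conjTranspose_mul, Matrix.conjTranspose_mul, hPherm.eq, hQ.eq]
    calc (1 - P) * (U'ᴴ * P) * ((1 - P) * U' * P)
        = (1 - P) * U'ᴴ * (P * (1 - P)) * (U' * P) := by noncomm_ring
      _ = 0 := by rw [hPQ, mul_zero, zero_mul]
  -- Pythagorean split
  have horth1 : dotProduct (star (A *ᵥ v)) (B *ᵥ v) = 0 := dot_zero_of n A B hAB v v
  have horth2 : dotProduct (star (B *ᵥ v)) (A *ᵥ v) = 0 := dot_zero_of n B A hBA v v
  have hsplit : en n ((A + B) *ᵥ v) ^ 2 = en n (A *ᵥ v) ^ 2 + en n (B *ᵥ v) ^ 2 := by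
    rw [en_sq, en_sq, en_sq, Matrix.add_mulVec]
    rw [star_add, add_dotProduct, dotProduct_add, dotProduct_add,
      horth1, horth2]
    simp
  -- bounds per block
  have hAv : en n (A *ᵥ v) ≤ (ε / Δ) * en n (P *ᵥ v) := by
    have : A *ᵥ v = A *ᵥ (P *ᵥ v) := by rw [Matrix.mulVec_mulVec, hAP]
    rw [this]
    exact le_trans (en_mulVec_le n A _) (mul_le_mul_of_nonneg_right hA (en_nonneg _ _))
  have hBv : en n (B *ᵥ v) ≤ (ε / Δ) * en n ((1 - P) *ᵥ v) := by
    have : B *ᵥ v = B *ᵥ ((1 - P) *ᵥ v) := by rw [Matrix.mulVec_mulVec, hBQ]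
    rw [this]
    exact le_trans (en_mulVec_le n B _) (mul_le_mul_of_nonneg_right hB (en_nonneg _ _))
  have hpy := pythag n P hPherm hPproj v
  have hc : 0 ≤ ε / Δ := div_nonneg hε hΔ.le
  have ha2 : en n (A *ᵥ v) ^ 2 ≤ ((ε / Δ) * en n (P *ᵥ v)) ^ 2 :=
    pow_le_pow_left₀ (en_nonneg n (A *ᵥ v)) hAv 2
  have hb2 : en n (B *ᵥ v) ^ 2 ≤ ((ε / Δ) * en n ((1 - P) *ᵥ v)) ^ 2 :=
    pow_le_pow_left₀ (en_nonneg n (B *ᵥ v)) hBv 2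
  have hfin : en n ((A + B) *ᵥ v) ^ 2 ≤ ((ε / Δ) * en n v) ^ 2 := by
    rw [hsplit]
    nlinarith [ha2, hb2, hpy, sq_nonneg (ε / Δ)]
  exact (pow_le_pow_iff_left₀ (en_nonneg _ _) (mul_nonneg hc (en_nonneg _ _))
    two_ne_zero).mp hfin
end

section
/- Let $H$ be self-adjoint with $H\Pi = 0$ and $H^2 \geq \Delta^2(I-\Pi)$ for an orthogonal projection $\Pi$ and $\Delta > 0$. Let $U$ be a unitary with $\|[U,H]\| \leq \epsilon$ and set $\xi = \epsilon/\Delta \leq 1$. Then $\|\Pi - |\Pi U \Pi|\| \leq 1 - \sqrt{1-\xi^2}$, i.e. the restriction of $U$ to the ground space is approximately unitary. -/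
open scoped Matrix Matrix.Norms.L2Operator ComplexOrder

/-- The positive semidefinite square root (removed from Mathlib; restored with its old definition). -/
noncomputable def Matrix.PosSemidef.sqrt {n 𝕜 : Type*} [Fintype n] [DecidableEq n] [RCLike 𝕜]
    {A : Matrix n n 𝕜} (hA : A.PosSemidef) : Matrix n n 𝕜 :=
  hA.1.eigenvectorUnitary.1 * Matrix.diagonal ((↑) ∘ (√·) ∘ hA.1.eigenvalues) *
    (star hA.1.eigenvectorUnitary : Matrix n n 𝕜)

lemma Matrix.PosSemidef.posSemidef_sqrt {m : ℕ} {A : Matrix (Fin m) (Fin m) ℂ}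
    (hA : A.PosSemidef) : hA.sqrt.PosSemidef := by
  unfold Matrix.PosSemidef.sqrt
  have hd : (Matrix.diagonal (((↑) ∘ (√·) ∘ hA.1.eigenvalues) : Fin m → ℂ)).PosSemidef := by
    rw [Matrix.posSemidef_diagonal_iff]
    intro i
    simp only [Function.comp_apply]
    exact Complex.zero_le_real.mpr (Real.sqrt_nonneg _)
  have := hd.mul_mul_conjTranspose_same (hA.1.eigenvectorUnitary : Matrix (Fin m) (Fin m) ℂ)
  rwa [← Matrix.star_eq_conjTranspose] at this

lemma Matrix.PosSemidef.sqrt_mul_self {m : ℕ} {A : Matrix (Fin m) (Fin m) ℂ}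
    (hA : A.PosSemidef) : hA.sqrt * hA.sqrt = A := by
  unfold Matrix.PosSemidef.sqrt
  set W : Matrix (Fin m) (Fin m) ℂ := (hA.1.eigenvectorUnitary : Matrix (Fin m) (Fin m) ℂ)
  have hWW : star W * W = 1 := Matrix.mem_unitaryGroup_iff'.mp hA.1.eigenvectorUnitary.2
  have hspec : A = W * Matrix.diagonal (RCLike.ofReal ∘ hA.1.eigenvalues) * star W := by
    conv_lhs => rw [hA.1.spectral_theorem]
    simp [Unitary.conjStarAlgAut_apply, W]
  have hD : Matrix.diagonal (((↑) ∘ (√·) ∘ hA.1.eigenvalues) : Fin m → ℂ) *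
      Matrix.diagonal (((↑) ∘ (√·) ∘ hA.1.eigenvalues) : Fin m → ℂ)
      = Matrix.diagonal (RCLike.ofReal ∘ hA.1.eigenvalues) := by
    rw [Matrix.diagonal_mul_diagonal]
    congr 1; funext i
    simp only [Function.comp_apply]
    rw [← Complex.ofReal_mul, Real.mul_self_sqrt (hA.eigenvalues_nonneg i)]
    rfl
  calc W * Matrix.diagonal (((↑) ∘ (√·) ∘ hA.1.eigenvalues) : Fin m → ℂ) * star W *
        (W * Matrix.diagonal (((↑) ∘ (√·) ∘ hA.1.eigenvalues) : Fin m → ℂ) * star W)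
      = W * (Matrix.diagonal (((↑) ∘ (√·) ∘ hA.1.eigenvalues) : Fin m → ℂ) * (star W * W) *
        Matrix.diagonal (((↑) ∘ (√·) ∘ hA.1.eigenvalues) : Fin m → ℂ)) * star W := by
        simp only [Matrix.mul_assoc]
    _ = A := by rw [hWW, Matrix.mul_one, hD]; exact hspec.symm

variable {n : ℕ}

lemma rsmul (r : ℝ) (M : Matrix (Fin n) (Fin n) ℂ) : r • M = (r : ℂ) • M := by
  ext i j; simp [Matrix.smul_apply, Complex.real_smul]

lemma dot_self_eq (x : Fin n → ℂ) :
    dotProduct (star x) x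
      = ((‖(WithLp.equiv 2 (Fin n → ℂ)).symm x‖ : ℝ) : ℂ) ^ 2 := by
  rw [dotProduct_comm]
  rw [← EuclideanSpace.inner_toLp_toLp, inner_self_eq_norm_sq_to_K]
  rfl

lemma dot_sq_eq (M : Matrix (Fin n) (Fin n) ℂ) (x : Fin n → ℂ) :
    dotProduct (star x) ((Mᴴ * M) *ᵥ x)
      = ((‖(WithLp.equiv 2 (Fin n → ℂ)).symm (M *ᵥ x)‖ : ℝ) : ℂ) ^ 2 := by
  rw [← Matrix.mulVec_mulVec, Matrix.dotProduct_mulVec, ← Matrix.star_mulVec,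
    ← dot_self_eq]

lemma herm_smul_one (c : ℝ) : (((c : ℂ)) • (1 : Matrix (Fin n) (Fin n) ℂ)).IsHermitian := by
  simp [Matrix.IsHermitian, Matrix.conjTranspose_smul]

lemma psd_of_norm_le {M : Matrix (Fin n) (Fin n) ℂ} {c : ℝ} (h : ‖M‖ ≤ c) :
    (((c ^ 2 : ℝ) : ℂ) • 1 - Mᴴ * M).PosSemidef := by
  have hc : 0 ≤ c := le_trans (norm_nonneg M) h
  apply Matrix.PosSemidef.of_dotProduct_mulVec_nonneg
  · exact (herm_smul_one _).sub (Matrix.isHermitian_conjTranspose_mul_self M)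
  · intro x
    rw [Matrix.sub_mulVec, dotProduct_sub, Matrix.smul_mulVec,
      Matrix.one_mulVec, dotProduct_smul, dot_self_eq, dot_sq_eq]
    have hb := Matrix.l2_opNorm_mulVec M ((WithLp.equiv 2 (Fin n → ℂ)).symm x)
    set a := ‖(WithLp.equiv 2 (Fin n → ℂ)).symm x‖ with ha
    set b := ‖(WithLp.equiv 2 (Fin n → ℂ)).symm (M *ᵥ x)‖ with hbdef
    have ha0 : 0 ≤ a := norm_nonneg _
    have hb0 : 0 ≤ b := norm_nonneg _
    have hb' : b ≤ c * a := by
      refine le_trans ?_ (mul_le_mul_of_nonneg_right h ha0)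
      exact hb
    have key : (0:ℝ) ≤ c ^ 2 * a ^ 2 - b ^ 2 := by nlinarith
    have : ((c ^ 2 : ℝ) : ℂ) • ((a : ℂ) ^ 2) - (b : ℂ) ^ 2
        = (((c ^ 2 * a ^ 2 - b ^ 2 : ℝ)) : ℂ) := by push_cast [smul_eq_mul]; ring
    rw [this]
    exact_mod_cast Complex.zero_le_real.mpr key

lemma norm_le_of_psd {M : Matrix (Fin n) (Fin n) ℂ} {c : ℝ} (hc : 0 ≤ c)
    (h : (((c ^ 2 : ℝ) : ℂ) • 1 - Mᴴ * M).PosSemidef) : ‖M‖ ≤ c := by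
  rw [Matrix.l2_opNorm_def]
  refine ContinuousLinearMap.opNorm_le_bound _ hc fun x => ?_
  have hq := h.dotProduct_mulVec_nonneg ((WithLp.equiv 2 (Fin n → ℂ)) x)
  set x' := (WithLp.equiv 2 (Fin n → ℂ)) x with hx'
  rw [Matrix.sub_mulVec, dotProduct_sub, Matrix.smul_mulVec,
    Matrix.one_mulVec, dotProduct_smul, dot_self_eq, dot_sq_eq] at hq
  have hxx : (WithLp.equiv 2 (Fin n → ℂ)).symm x' = x := by simp [hx']
  rw [hxx] at hq
  set a := ‖x‖ with ha
  set b := ‖(WithLp.equiv 2 (Fin n → ℂ)).symm (M *ᵥ x')‖ with hbdef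
  have hq' : (0:ℝ) ≤ c ^ 2 * a ^ 2 - b ^ 2 := by
    have : ((c ^ 2 : ℝ) : ℂ) • ((a : ℂ) ^ 2) - (b : ℂ) ^ 2
        = (((c ^ 2 * a ^ 2 - b ^ 2 : ℝ)) : ℂ) := by push_cast [smul_eq_mul]; ring
    rw [this] at hq
    exact_mod_cast Complex.zero_le_real.mp (by exact_mod_cast hq)
  have hgoal : ‖(Matrix.toEuclideanLin.trans LinearMap.toContinuousLinearMap M) x‖ = b := rfl
  rw [hgoal]
  have ha0 : 0 ≤ a := norm_nonneg _
  have hb0 : 0 ≤ b := norm_nonneg _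
  nlinarith [mul_nonneg hc ha0, sq_nonneg (b + c*a)]

lemma psd_smul {M : Matrix (Fin n) (Fin n) ℂ} (hM : M.PosSemidef) {r : ℝ} (hr : 0 ≤ r) :
    ((r : ℂ) • M).PosSemidef := by
  apply Matrix.PosSemidef.of_dotProduct_mulVec_nonneg
  · have := hM.1
    simp [Matrix.IsHermitian, Matrix.conjTranspose_smul, this.eq]
  · intro x
    rw [Matrix.smul_mulVec, dotProduct_smul, smul_eq_mul]
    exact mul_nonneg (by exact_mod_cast Complex.zero_le_real.mpr hr) (hM.dotProduct_mulVec_nonneg x)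

lemma eig_sq_ge {T : Matrix (Fin n) (Fin n) ℂ} (hT : T.IsHermitian) {s : ℝ}
    (h : (T * T - (s : ℂ) • 1).PosSemidef) (i : Fin n) :
    s ≤ hT.eigenvalues i ^ 2 := by
  have hv := hT.mulVec_eigenvectorBasis i
  set μ := hT.eigenvalues i with hμ
  set v := ⇑(hT.eigenvectorBasis i) with hvdef
  have hvv : dotProduct (star v) v = 1 := by
    have := hT.eigenvectorBasis.orthonormal.1 i
    have h2 : (inner ℂ (hT.eigenvectorBasis i) (hT.eigenvectorBasis i) : ℂ) = 1 := by
      rw [inner_self_eq_norm_sq_to_K, this]; norm_num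
    rw [EuclideanSpace.inner_eq_star_dotProduct, dotProduct_comm] at h2
    exact h2
  have hTT : (T * T) *ᵥ v = ((μ ^ 2 : ℝ) : ℂ) • v := by
    rw [← Matrix.mulVec_mulVec, hv, Matrix.mulVec_smul, hv]
    ext j
    simp [Pi.smul_apply, Complex.real_smul]
    push_cast
    ring
  have hq := (RCLike.nonneg_iff.mp (h.dotProduct_mulVec_nonneg v)).1
  rw [Matrix.sub_mulVec, dotProduct_sub, hTT, Matrix.smul_mulVec,
    Matrix.one_mulVec, dotProduct_smul, dotProduct_smul,
    smul_eq_mul, smul_eq_mul, hvv, mul_one, mul_one] at hq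
  have : ((μ ^ 2 : ℝ) : ℂ) - (s : ℂ) = (((μ ^ 2 - s : ℝ)) : ℂ) := by push_cast; ring
  rw [this] at hq
  rw [RCLike.re_to_complex, Complex.ofReal_re] at hq
  linarith

lemma norm_one_sub_le {T : Matrix (Fin n) (Fin n) ℂ} (hT : T.IsHermitian) {t : ℝ}
    (ht1 : t ≤ 1)
    (hlow : ∀ i, t ≤ hT.eigenvalues i) (hup : ∀ i, hT.eigenvalues i ≤ 1) :
    ‖(1 : Matrix (Fin n) (Fin n) ℂ) - T‖ ≤ 1 - t := by
  apply norm_le_of_psd (by linarith)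
  set c : ℝ := 1 - t with hc
  set W : Matrix (Fin n) (Fin n) ℂ := (Matrix.IsHermitian.eigenvectorUnitary hT : Matrix (Fin n) (Fin n) ℂ) with hWdef
  set D : Matrix (Fin n) (Fin n) ℂ := Matrix.diagonal (RCLike.ofReal ∘ hT.eigenvalues) with hDdef
  have hWW : W * Wᴴ = 1 := by
    rw [← Matrix.star_eq_conjTranspose]
    exact (Matrix.mem_unitaryGroup_iff).mp (Matrix.IsHermitian.eigenvectorUnitary hT).2
  have hWW' : Wᴴ * W = 1 := by
    rw [← Matrix.star_eq_conjTranspose]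
    exact (Matrix.mem_unitaryGroup_iff').mp (Matrix.IsHermitian.eigenvectorUnitary hT).2
  have hspec : T = W * D * Wᴴ := by
    rw [← Matrix.star_eq_conjTranspose]
    conv_lhs => rw [hT.spectral_theorem]
    simp [Unitary.conjStarAlgAut_apply, W, D]
  have h1T : (1 : Matrix (Fin n) (Fin n) ℂ) - T = W * (1 - D) * Wᴴ := by
    rw [Matrix.mul_sub, Matrix.mul_one, Matrix.sub_mul, hWW, hspec]
  have h1Therm : ((1 : Matrix (Fin n) (Fin n) ℂ) - T)ᴴ = 1 - T := by
    simp [Matrix.conjTranspose_sub, hT.eq]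
  have hprod : ((1 : Matrix (Fin n) (Fin n) ℂ) - T)ᴴ * (1 - T)
      = W * ((1 - D) * (1 - D)) * Wᴴ := by
    rw [h1Therm, h1T]
    calc W * (1 - D) * Wᴴ * (W * (1 - D) * Wᴴ)
        = W * (1 - D) * (Wᴴ * W) * (1 - D) * Wᴴ := by
          simp only [Matrix.mul_assoc]
      _ = W * ((1 - D) * (1 - D)) * Wᴴ := by
          rw [hWW']; simp only [Matrix.mul_assoc, Matrix.mul_one]
  have hcone : ((c ^ 2 : ℝ) : ℂ) • (1 : Matrix (Fin n) (Fin n) ℂ)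
      = W * (((c ^ 2 : ℝ) : ℂ) • 1) * Wᴴ := by
    rw [Matrix.mul_smul, Matrix.mul_one, Matrix.smul_mul, hWW]
  have hE : (((c ^ 2 : ℝ) : ℂ) • 1 : Matrix (Fin n) (Fin n) ℂ) - (1 - D) * (1 - D)
      = Matrix.diagonal (fun i => ((c ^ 2 - (1 - hT.eigenvalues i) ^ 2 : ℝ) : ℂ)) := by
    have h1D : (1 : Matrix (Fin n) (Fin n) ℂ) - D
        = Matrix.diagonal (fun i => ((1 - hT.eigenvalues i : ℝ) : ℂ)) := by
      ext i j
      rcases eq_or_ne i j with rfl | hne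
      · simp [Matrix.sub_apply, hDdef]
      · simp [Matrix.sub_apply, Matrix.diagonal_apply_ne _ hne, Matrix.one_apply_ne hne, hDdef]
    rw [h1D, Matrix.diagonal_mul_diagonal]
    ext i j
    rcases eq_or_ne i j with rfl | hne
    · simp [Matrix.sub_apply, Matrix.smul_apply]
      push_cast; ring
    · simp [Matrix.sub_apply, Matrix.smul_apply, Matrix.diagonal_apply_ne _ hne,
        Matrix.one_apply_ne hne]
  have key : (((c ^ 2 : ℝ) : ℂ) • 1 : Matrix (Fin n) (Fin n) ℂ) - (1 - T)ᴴ * (1 - T)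
      = W * (Matrix.diagonal (fun i => ((c ^ 2 - (1 - hT.eigenvalues i) ^ 2 : ℝ) : ℂ))) * Wᴴ := by
    have expand : W * ((((c ^ 2 : ℝ) : ℂ) • 1 : Matrix (Fin n) (Fin n) ℂ) - (1 - D) * (1 - D)) * Wᴴ
        = W * (((c ^ 2 : ℝ) : ℂ) • 1) * Wᴴ - W * ((1 - D) * (1 - D)) * Wᴴ := by
      rw [Matrix.mul_sub, Matrix.sub_mul]
    rw [← hE, expand, ← hcone, ← hprod]
  rw [key]
  apply Matrix.PosSemidef.mul_mul_conjTranspose_same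
  rw [Matrix.posSemidef_diagonal_iff]
  intro i
  have h1 := hlow i
  have h2 := hup i
  have : (0:ℝ) ≤ c ^ 2 - (1 - hT.eigenvalues i) ^ 2 := by nlinarith
  exact_mod_cast Complex.zero_le_real.mpr this

lemma eig_sq_le {T : Matrix (Fin n) (Fin n) ℂ} (hT : T.IsHermitian) {s : ℝ}
    (h : ((s : ℂ) • 1 - T * T).PosSemidef) (i : Fin n) :
    hT.eigenvalues i ^ 2 ≤ s := by
  have hv := hT.mulVec_eigenvectorBasis i
  set μ := hT.eigenvalues i with hμ
  set v := ⇑(hT.eigenvectorBasis i) with hvdef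
  have hvv : dotProduct (star v) v = 1 := by
    have := hT.eigenvectorBasis.orthonormal.1 i
    have h2 : (inner ℂ (hT.eigenvectorBasis i) (hT.eigenvectorBasis i) : ℂ) = 1 := by
      rw [inner_self_eq_norm_sq_to_K, this]; norm_num
    rw [EuclideanSpace.inner_eq_star_dotProduct, dotProduct_comm] at h2
    exact h2
  have hTT : (T * T) *ᵥ v = ((μ ^ 2 : ℝ) : ℂ) • v := by
    rw [← Matrix.mulVec_mulVec, hv, Matrix.mulVec_smul, hv]
    ext j
    simp [Pi.smul_apply, Complex.real_smul]
    ring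
  have hq := (RCLike.nonneg_iff.mp (h.dotProduct_mulVec_nonneg v)).1
  rw [Matrix.sub_mulVec, dotProduct_sub, hTT, Matrix.smul_mulVec,
    Matrix.one_mulVec, dotProduct_smul, dotProduct_smul,
    smul_eq_mul, smul_eq_mul, hvv, mul_one, mul_one] at hq
  have : (s : ℂ) - ((μ ^ 2 : ℝ) : ℂ) = (((s - μ ^ 2 : ℝ)) : ℂ) := by push_cast; ring
  rw [this] at hq
  rw [RCLike.re_to_complex, Complex.ofReal_re] at hq
  linarith

/-- Approximate unitarity on the ground space: if `H P = 0`, `H² ≥ Δ²(1-P)`,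
`U` is unitary with `‖[U,H]‖ ≤ ε` and `ξ = ε/Δ ≤ 1`, then
`‖P - |P U P|‖ ≤ 1 - √(1 - ξ²)`, where `|M|` is the positive square root of `Mᴴ M`. -/
theorem stmt_5 (n : ℕ) (H P : Matrix (Fin n) (Fin n) ℂ) (Δ ε : ℝ) (hΔ : 0 < Δ)
    (hH : H.IsHermitian) (hPherm : P.IsHermitian) (hPproj : P * P = P)
    (hker : H * P = 0)
    (hgap : (H * H - (Δ ^ 2 : ℝ) • (1 - P)).PosSemidef)
    (U : Matrix.unitaryGroup (Fin n) ℂ)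
    (hcomm : ‖(U : Matrix (Fin n) (Fin n) ℂ) * H - H * (U : Matrix (Fin n) (Fin n) ℂ)‖ ≤ ε)
    (hξ : ε / Δ ≤ 1) :
    ‖P - (Matrix.posSemidef_conjTranspose_mul_self
        (P * (U : Matrix (Fin n) (Fin n) ℂ) * P)).sqrt‖ ≤
      1 - Real.sqrt (1 - (ε / Δ) ^ 2) := by
  have hε : 0 ≤ ε := le_trans (norm_nonneg _) hcomm
  have hξ0 : 0 ≤ ε / Δ := div_nonneg hε hΔ.le
  set ξ : ℝ := ε / Δ with hξdef
  have hsq1 : 0 ≤ 1 - ξ ^ 2 := by nlinarith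
  set t : ℝ := Real.sqrt (1 - ξ ^ 2) with htdef
  have ht0 : 0 ≤ t := Real.sqrt_nonneg _
  have ht1 : t ≤ 1 := by
    rw [htdef, Real.sqrt_le_one]; nlinarith
  have ht2 : t ^ 2 = 1 - ξ ^ 2 := Real.sq_sqrt hsq1
  set U' : Matrix (Fin n) (Fin n) ℂ := (U : Matrix (Fin n) (Fin n) ℂ) with hU'def
  have hP : Pᴴ = P := hPherm.eq
  have hUU : U'ᴴ * U' = 1 := by
    rw [← Matrix.star_eq_conjTranspose]
    exact Matrix.mem_unitaryGroup_iff'.mp U.2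
  have hPP : ∀ X : Matrix (Fin n) (Fin n) ℂ, P * (P * X) = P * X := fun X => by
    rw [← Matrix.mul_assoc, hPproj]
  have hUUl : ∀ X : Matrix (Fin n) (Fin n) ℂ, U'ᴴ * (U' * X) = X := fun X => by
    rw [← Matrix.mul_assoc, hUU, Matrix.one_mul]
  set A : Matrix (Fin n) (Fin n) ℂ := (P * U' * P)ᴴ * (P * U' * P) with hAdef
  have hA : A.PosSemidef := Matrix.posSemidef_conjTranspose_mul_self _
  set S : Matrix (Fin n) (Fin n) ℂ :=
    (Matrix.posSemidef_conjTranspose_mul_self (P * U' * P)).sqrt with hSdef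
  have hAcan : A = P * (U'ᴴ * (P * (U' * P))) := by
    simp [hAdef, Matrix.conjTranspose_mul, hP, Matrix.mul_assoc, hPP]
  have hPA : P * A = A := by rw [hAcan, hPP]
  have hAP : A * P = A := by
    simp only [hAcan, Matrix.mul_assoc, hPproj]
  have hSpsd : S.PosSemidef :=
    (Matrix.posSemidef_conjTranspose_mul_self (P * U' * P)).posSemidef_sqrt
  have hSS : S * S = A :=
    (Matrix.posSemidef_conjTranspose_mul_self (P * U' * P)).sqrt_mul_self
  have hSherm : Sᴴ = S := hSpsd.1.eq
  have hS1P : S * (1 - P) = 0 := by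
    apply Matrix.conjTranspose_mul_self_eq_zero.mp
    have : (S * (1 - P))ᴴ * (S * (1 - P)) = (1 - P) * (S * S) * (1 - P) := by
      rw [Matrix.conjTranspose_mul, hSherm]
      simp [Matrix.conjTranspose_sub, hP, Matrix.mul_assoc]
    rw [this, hSS]
    simp [Matrix.sub_mul, Matrix.mul_sub, hPA, hAP]
  have hSP : S * P = S := by
    have := hS1P
    rw [Matrix.mul_sub, Matrix.mul_one, sub_eq_zero] at this
    exact this.symm
  have hPS : P * S = S := by
    have h1 : (S * P)ᴴ = P * S := by rw [Matrix.conjTranspose_mul, hSherm, hP]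
    rw [← h1, hSP, hSherm]
  set T : Matrix (Fin n) (Fin n) ℂ := S + (1 - P) with hTdef
  have hQQ : ((1 : Matrix (Fin n) (Fin n) ℂ) - P) * (1 - P) = 1 - P := by
    rw [Matrix.mul_sub, Matrix.mul_one, Matrix.sub_mul, Matrix.one_mul, hPproj]
    abel
  have hQherm : ((1 : Matrix (Fin n) (Fin n) ℂ) - P)ᴴ = 1 - P := by
    simp [Matrix.conjTranspose_sub, hP]
  have hQpsd : ((1 : Matrix (Fin n) (Fin n) ℂ) - P).PosSemidef := by
    have : ((1 : Matrix (Fin n) (Fin n) ℂ) - P)ᴴ * (1 - P) = 1 - P := by rw [hQherm, hQQ]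
    rw [← this]
    exact Matrix.posSemidef_conjTranspose_mul_self _
  have hTherm : T.IsHermitian := by
    show Tᴴ = T
    rw [hTdef, Matrix.conjTranspose_add, hSherm, hQherm]
  have hTpsd : T.PosSemidef := hSpsd.add hQpsd
  have hPS1 : ((1 : Matrix (Fin n) (Fin n) ℂ) - P) * S = 0 := by
    have : (S * (1 - P))ᴴ = (1 - P) * S := by rw [Matrix.conjTranspose_mul, hSherm, hQherm]
    rw [← this, hS1P, Matrix.conjTranspose_zero]
  have hTT : T * T = A + (1 - P) := by
    rw [hTdef, Matrix.add_mul, Matrix.mul_add, Matrix.mul_add, hSS, hS1P, hPS1, hQQ]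
    abel
  set K : Matrix (Fin n) (Fin n) ℂ := U' * H - H * U' with hKdef
  have hK : ‖K‖ ≤ ε := hcomm
  have hKK : (((ε ^ 2 : ℝ) : ℂ) • 1 - Kᴴ * K).PosSemidef := psd_of_norm_le hK
  set G : Matrix (Fin n) (Fin n) ℂ := U' * P with hGdef
  set B : Matrix (Fin n) (Fin n) ℂ := (1 - P) * G with hBdef
  have hKP : K * P = -(H * G) := by
    rw [hKdef, hGdef, Matrix.sub_mul, Matrix.mul_assoc, Matrix.mul_assoc, hker,
      Matrix.mul_zero, zero_sub]
  have hQQl : ∀ X : Matrix (Fin n) (Fin n) ℂ, (1 - P) * ((1 - P) * X) = (1 - P) * X :=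
    fun X => by rw [← Matrix.mul_assoc, hQQ]
  have hB' : Gᴴ * ((1 - P) * G) = Bᴴ * B := by
    rw [hBdef, Matrix.conjTranspose_mul (1 - P) G, hQherm,
      Matrix.mul_assoc Gᴴ (1 - P) ((1 - P) * G), hQQl]
  have hmid' : Gᴴ * (H * (H * G)) = (K * P)ᴴ * (K * P) := by
    have h1 : (K * P)ᴴ * (K * P) = (H * G)ᴴ * (H * G) := by
      rw [hKP, Matrix.conjTranspose_neg, Matrix.neg_mul, Matrix.mul_neg, neg_neg]
    rw [h1, Matrix.conjTranspose_mul H G, hH.eq, Matrix.mul_assoc]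
  have hgapC : (H * H - ((Δ ^ 2 : ℝ) : ℂ) • (1 - P)).PosSemidef := by
    rw [← rsmul]; exact hgap
  have hDDgap : ((K * P)ᴴ * (K * P) - ((Δ ^ 2 : ℝ) : ℂ) • (Bᴴ * B)).PosSemidef := by
    have h := hgapC.conjTranspose_mul_mul_same G
    have heq : Gᴴ * (H * H - ((Δ ^ 2 : ℝ) : ℂ) • (1 - P)) * G
        = (K * P)ᴴ * (K * P) - ((Δ ^ 2 : ℝ) : ℂ) • (Bᴴ * B) := by
      have e1 : Gᴴ * (H * H - ((Δ ^ 2 : ℝ) : ℂ) • (1 - P)) * G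
          = Gᴴ * (H * H) * G - ((Δ ^ 2 : ℝ) : ℂ) • (Gᴴ * (1 - P) * G) := by
        rw [Matrix.mul_sub, Matrix.sub_mul, Matrix.mul_smul, Matrix.smul_mul]
      rw [e1, Matrix.mul_assoc Gᴴ (H * H) G, Matrix.mul_assoc H H G,
        Matrix.mul_assoc Gᴴ (1 - P) G, hmid', hB']
    rw [← heq]; exact h
  have hKKP : (((ε ^ 2 : ℝ) : ℂ) • P - (K * P)ᴴ * (K * P)).PosSemidef := by
    have h := hKK.conjTranspose_mul_mul_same P
    have heq : Pᴴ * ((((ε ^ 2 : ℝ) : ℂ) • 1 - Kᴴ * K)) * P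
        = ((ε ^ 2 : ℝ) : ℂ) • P - (K * P)ᴴ * (K * P) := by
      simp only [Matrix.mul_sub, Matrix.sub_mul, Matrix.mul_smul, Matrix.smul_mul,
        Matrix.mul_assoc, Matrix.mul_one, Matrix.one_mul, hP, hPproj,
        Matrix.conjTranspose_mul]
    rw [← heq]; exact h
  have hsum : (((ε ^ 2 : ℝ) : ℂ) • P - ((Δ ^ 2 : ℝ) : ℂ) • (Bᴴ * B)).PosSemidef := by
    have h := hKKP.add hDDgap
    rw [sub_add_sub_cancel] at h
    exact h
  have hBBeq : Bᴴ * B = P - A := by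
    rw [← hB', hGdef]
    simp only [Matrix.mul_sub, Matrix.sub_mul, Matrix.one_mul, Matrix.conjTranspose_mul,
      hP, Matrix.mul_assoc, hUUl, hPproj]
    rw [hAcan]
  have hΔc : ((Δ : ℂ)) ≠ 0 := by exact_mod_cast hΔ.ne'
  have hs1 : (((Δ ^ 2)⁻¹ : ℝ) : ℂ) * ((ε ^ 2 : ℝ) : ℂ) = ((ξ ^ 2 : ℝ) : ℂ) := by
    rw [hξdef]; push_cast; field_simp
  have hs2 : (((Δ ^ 2)⁻¹ : ℝ) : ℂ) * ((Δ ^ 2 : ℝ) : ℂ) = 1 := by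
    push_cast; field_simp
  have hAlow : (A - ((1 - ξ ^ 2 : ℝ) : ℂ) • P).PosSemidef := by
    have h := psd_smul hsum (r := (Δ ^ 2)⁻¹) (by positivity)
    have heq : (((Δ ^ 2)⁻¹ : ℝ) : ℂ) • ((((ε ^ 2 : ℝ) : ℂ) • P) - (((Δ ^ 2 : ℝ) : ℂ) • (Bᴴ * B)))
        = A - ((1 - ξ ^ 2 : ℝ) : ℂ) • P := by
      rw [smul_sub, smul_smul, smul_smul, hs1, hs2, one_smul, hBBeq,
        show ((1 - ξ ^ 2 : ℝ) : ℂ) = 1 - ((ξ ^ 2 : ℝ) : ℂ) by push_cast; ring,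
        sub_smul, one_smul]
      abel
    rw [← heq]; exact h
  have hTlow : (T * T - ((1 - ξ ^ 2 : ℝ) : ℂ) • 1).PosSemidef := by
    have h2 := psd_smul hQpsd (r := ξ ^ 2) (sq_nonneg _)
    have h := hAlow.add h2
    have heq : (A - ((1 - ξ ^ 2 : ℝ) : ℂ) • P) + ((ξ ^ 2 : ℝ) : ℂ) • (1 - P)
        = T * T - ((1 - ξ ^ 2 : ℝ) : ℂ) • 1 := by
      rw [hTT, smul_sub,
        show ((1 - ξ ^ 2 : ℝ) : ℂ) = 1 - ((ξ ^ 2 : ℝ) : ℂ) by push_cast; ring,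
        sub_smul, sub_smul, one_smul, one_smul]
      abel
    rw [← heq]; exact h
  have hTup : (((1 : ℝ) : ℂ) • 1 - T * T).PosSemidef := by
    have heq : ((1 : ℝ) : ℂ) • (1 : Matrix (Fin n) (Fin n) ℂ) - T * T = Bᴴ * B := by
      rw [hTT, hBBeq, Complex.ofReal_one, one_smul]
      abel
    rw [heq]; exact Matrix.posSemidef_conjTranspose_mul_self B
  have hμ0 : ∀ i, 0 ≤ hTherm.eigenvalues i := fun i => hTpsd.eigenvalues_nonneg i
  have hμlow : ∀ i, t ≤ hTherm.eigenvalues i := by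
    intro i
    have h := eig_sq_ge hTherm hTlow i
    nlinarith [hμ0 i, ht2, ht0]
  have hμup : ∀ i, hTherm.eigenvalues i ≤ 1 := by
    intro i
    have h := eig_sq_le hTherm hTup i
    nlinarith [hμ0 i]
  have hPTP : P * T * P = S := by
    rw [hTdef]
    simp only [Matrix.mul_add, Matrix.add_mul, Matrix.mul_sub, Matrix.sub_mul,
      Matrix.mul_one, Matrix.one_mul, hPS, hSP, hPproj]
    abel
  have hXeq : P - S = P * ((1 : Matrix (Fin n) (Fin n) ℂ) - T) * P := by
    rw [Matrix.mul_sub, Matrix.mul_one, Matrix.sub_mul, hPTP, hPproj]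
  have hPnorm : ‖P‖ ≤ 1 := by
    have h := Matrix.l2_opNorm_conjTranspose_mul_self P
    rw [hP, hPproj] at h
    nlinarith [norm_nonneg P]
  have hYnorm : ‖(1 : Matrix (Fin n) (Fin n) ℂ) - T‖ ≤ 1 - t :=
    norm_one_sub_le hTherm ht1 hμlow hμup
  rw [hXeq]
  calc ‖P * ((1 : Matrix (Fin n) (Fin n) ℂ) - T) * P‖
      ≤ ‖P * ((1 : Matrix (Fin n) (Fin n) ℂ) - T)‖ * ‖P‖ := Matrix.l2_opNorm_mul _ _
    _ ≤ (‖P‖ * ‖(1 : Matrix (Fin n) (Fin n) ℂ) - T‖) * ‖P‖ :=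
        mul_le_mul_of_nonneg_right (Matrix.l2_opNorm_mul _ _) (norm_nonneg _)
    _ ≤ 1 * ‖(1 : Matrix (Fin n) (Fin n) ℂ) - T‖ * 1 := by
        gcongr <;> exact hPnorm
    _ = ‖(1 : Matrix (Fin n) (Fin n) ℂ) - T‖ := by ring
    _ ≤ 1 - t := hYnorm
end

section
/- Let $u, v$ be unitaries with $\|uv - \eta vu\| \leq \delta$ where $\eta = e^{2\pi i/d}$, and let $|\psi\rangle$ be a unit eigenvector of $u$ with $u|\psi\rangle = |\psi\rangle$. Define $|j\rangle := v^j |\psi\rangle$. Then $|\langle j | u | j\rangle - \eta^j| \leq |j| \delta$ for every integer $j$. -/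
open scoped Matrix Matrix.Norms.L2Operator

set_option maxHeartbeats 2000000 in
/-- Change in expectation value, one pair: if `‖uv - η vu‖ ≤ δ` with `η = e^{2πi/d}`
and `u ψ = ψ` for a unit vector `ψ`, then the state `|j⟩ = v^j ψ` satisfies
`|⟨j|u|j⟩ - η^j| ≤ |j| δ` for every integer `j`. -/
theorem stmt_8 (n d : ℕ) (hd : 0 < d) (δ : ℝ)
    (u v : Matrix.unitaryGroup (Fin n) ℂ)
    (h : ‖(u : Matrix (Fin n) (Fin n) ℂ) * v -
        Complex.exp (2 * Real.pi * Complex.I / d) • ((v : Matrix (Fin n) (Fin n) ℂ) * u)‖ ≤ δ)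
    (ψ : EuclideanSpace ℂ (Fin n)) (hψ : ‖ψ‖ = 1)
    (hfix : (u : Matrix (Fin n) (Fin n) ℂ).mulVec ψ = ψ)
    (j : ℤ)
    (ket : EuclideanSpace ℂ (Fin n))
    (hket : ket = ((v ^ j : Matrix.unitaryGroup (Fin n) ℂ) : Matrix (Fin n) (Fin n) ℂ).mulVec ψ)
    (expval : ℂ)
    (hexp : expval = inner (𝕜 := ℂ) ket
      (WithLp.toLp 2 ((u : Matrix (Fin n) (Fin n) ℂ).mulVec ket) : EuclideanSpace ℂ (Fin n))) :
    ‖expval - Complex.exp (2 * Real.pi * Complex.I / d) ^ j‖ ≤ |(j : ℝ)| * δ := by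
  set η : ℂ := Complex.exp (2 * Real.pi * Complex.I / d) with hη
  have hηne : η ≠ 0 := Complex.exp_ne_zero _
  -- basic facts
  have hn : Nonempty (Fin n) := by
    by_contra hc
    rw [not_nonempty_iff] at hc
    have : ψ = 0 := Subsingleton.elim _ _
    rw [this, norm_zero] at hψ
    exact one_ne_zero hψ.symm
  haveI : Nontrivial (Matrix (Fin n) (Fin n) ℂ) := inferInstance
  have hδ0 : 0 ≤ δ := le_trans (norm_nonneg _) h
  have hηre : (2 * Real.pi * Complex.I / d).re = 0 := by
    simp [Complex.div_re, Complex.mul_re]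
  have hηabs : ‖η‖ = 1 := by
    rw [hη, Complex.norm_exp, hηre, Real.exp_zero]
  have hηzabs : ∀ k : ℤ, ‖η ^ k‖ = 1 := fun k => by
    rw [norm_zpow, hηabs, one_zpow]
  -- notation for coerced matrix powers
  set W : ℤ → Matrix (Fin n) (Fin n) ℂ :=
    fun k => ((v ^ k : Matrix.unitaryGroup (Fin n) ℂ) : Matrix (Fin n) (Fin n) ℂ) with hW
  have hWmem : ∀ k : ℤ, W k ∈ Matrix.unitaryGroup (Fin n) ℂ := fun k => (v ^ k).2
  -- the inverse matrix relations
  have hVw : (v : Matrix (Fin n) (Fin n) ℂ) * W (-1) = 1 := by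
    have : ((v * v ^ (-1 : ℤ) : Matrix.unitaryGroup (Fin n) ℂ) :
        Matrix (Fin n) (Fin n) ℂ) = 1 := by
      rw [zpow_neg_one, mul_inv_cancel]; rfl
    simpa [hW] using this
  have hwV : W (-1) * (v : Matrix (Fin n) (Fin n) ℂ) = 1 := by
    have : ((v ^ (-1 : ℤ) * v : Matrix.unitaryGroup (Fin n) ℂ) :
        Matrix (Fin n) (Fin n) ℂ) = 1 := by
      rw [zpow_neg_one, inv_mul_cancel]; rfl
    simpa [hW] using this
  -- the step relation for v⁻¹
  have hstepneg : ‖(u : Matrix (Fin n) (Fin n) ℂ) * W (-1) -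
      η⁻¹ • (W (-1) * u)‖ ≤ δ := by
    have e1 : W (-1) * ((u : Matrix (Fin n) (Fin n) ℂ) * v -
        η • ((v : Matrix (Fin n) (Fin n) ℂ) * u)) * W (-1) =
        W (-1) * u - η • ((u : Matrix (Fin n) (Fin n) ℂ) * W (-1)) := by
      simp only [mul_sub, sub_mul, mul_smul_comm, smul_mul_assoc, mul_assoc, hVw, mul_one]
      rw [← mul_assoc (W (-1)) (v : Matrix (Fin n) (Fin n) ℂ), hwV, one_mul]
    have hid : (u : Matrix (Fin n) (Fin n) ℂ) * W (-1) - η⁻¹ • (W (-1) * u) =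
        (-η⁻¹) • (W (-1) * ((u : Matrix (Fin n) (Fin n) ℂ) * v -
          η • ((v : Matrix (Fin n) (Fin n) ℂ) * u)) * W (-1)) := by
      rw [e1, smul_sub, smul_smul, neg_mul, inv_mul_cancel₀ hηne, neg_smul, neg_smul, one_smul,
        sub_neg_eq_add, neg_add_eq_sub]
    rw [hid, norm_smul]
    rw [CStarRing.norm_mul_mem_unitary _ (hWmem (-1)),
      CStarRing.norm_mem_unitary_mul _ (hWmem (-1))]
    have : ‖-η⁻¹‖ = 1 := by
      rw [norm_neg, norm_inv, hηabs, inv_one]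
    rw [this, one_mul]
    exact h
  -- key estimate
  have key : ∀ k : ℤ, ‖(u : Matrix (Fin n) (Fin n) ℂ) * W k - (η ^ k) • (W k * u)‖
      ≤ |(k : ℝ)| * δ := by
    intro k
    induction k using Int.induction_on with
    | zero => simp [hW]
    | succ i ih =>
        have hWsucc : W ((i : ℤ) + 1) = W i * (v : Matrix (Fin n) (Fin n) ℂ) := by
          have : (v : Matrix.unitaryGroup (Fin n) ℂ) ^ ((i : ℤ) + 1) = v ^ (i : ℤ) * v :=
            zpow_add_one v i
          simp [hW, this]
        have hid : (u : Matrix (Fin n) (Fin n) ℂ) * W ((i : ℤ) + 1) -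
            (η ^ ((i : ℤ) + 1)) • (W ((i : ℤ) + 1) * u) =
            ((u : Matrix (Fin n) (Fin n) ℂ) * W i - (η ^ (i : ℤ)) • (W i * u)) * v +
            (η ^ (i : ℤ)) • (W i * ((u : Matrix (Fin n) (Fin n) ℂ) * v -
              η • ((v : Matrix (Fin n) (Fin n) ℂ) * u))) := by
          rw [hWsucc, zpow_add_one₀ hηne]
          simp only [mul_sub, sub_mul, smul_sub, smul_mul_assoc, mul_smul_comm, smul_smul,
            mul_assoc]
          abel
        rw [hid]
        have hb : ‖((u : Matrix (Fin n) (Fin n) ℂ) * W i - (η ^ (i : ℤ)) • (W i * u)) *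
              (v : Matrix (Fin n) (Fin n) ℂ) +
              (η ^ (i : ℤ)) • (W i * ((u : Matrix (Fin n) (Fin n) ℂ) * v -
                η • ((v : Matrix (Fin n) (Fin n) ℂ) * u)))‖
            ≤ |((i : ℤ) : ℝ)| * δ + δ := by
          refine le_trans (norm_add_le _ _) ?_
          gcongr
          · rw [CStarRing.norm_mul_mem_unitary _ v.2]
            exact ih
          · rw [norm_smul, hηzabs i, one_mul, CStarRing.norm_mem_unitary_mul _ (hWmem i)]
            exact h
        refine le_trans hb ?_
        have h1 : |((i : ℤ) : ℝ)| = (i : ℝ) := by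
          push_cast; exact abs_of_nonneg (Nat.cast_nonneg i)
        have h2 : |(((i : ℤ) + 1 : ℤ) : ℝ)| = (i : ℝ) + 1 := by
          push_cast; exact abs_of_nonneg (by positivity)
        rw [h1, h2]
        nlinarith [hδ0]
    | pred i ih =>
        have hWpred : W (-(i : ℤ) - 1) = W (-(i : ℤ)) * W (-1) := by
          have : (v : Matrix.unitaryGroup (Fin n) ℂ) ^ (-(i : ℤ) - 1)
              = v ^ (-(i : ℤ)) * v ^ (-1 : ℤ) := by
            rw [← zpow_add]; ring_nf
          simp [hW, this]
        have hid : (u : Matrix (Fin n) (Fin n) ℂ) * W (-(i : ℤ) - 1) -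
            (η ^ (-(i : ℤ) - 1)) • (W (-(i : ℤ) - 1) * u) =
            ((u : Matrix (Fin n) (Fin n) ℂ) * W (-(i : ℤ)) -
              (η ^ (-(i : ℤ))) • (W (-(i : ℤ)) * u)) * W (-1) +
            (η ^ (-(i : ℤ))) • (W (-(i : ℤ)) * ((u : Matrix (Fin n) (Fin n) ℂ) * W (-1) -
              η⁻¹ • (W (-1) * u))) := by
          rw [hWpred, show η ^ (-(i : ℤ) - 1) = η ^ (-(i : ℤ)) * η⁻¹ by
            rw [zpow_sub_one₀ hηne]]
          simp only [mul_sub, sub_mul, smul_sub, smul_mul_assoc, mul_smul_comm, smul_smul,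
            mul_assoc]
          abel
        rw [hid]
        have hb : ‖((u : Matrix (Fin n) (Fin n) ℂ) * W (-(i : ℤ)) -
              (η ^ (-(i : ℤ))) • (W (-(i : ℤ)) * u)) * W (-1) +
              (η ^ (-(i : ℤ))) • (W (-(i : ℤ)) * ((u : Matrix (Fin n) (Fin n) ℂ) * W (-1) -
                η⁻¹ • (W (-1) * u)))‖
            ≤ |((-(i : ℤ) : ℤ) : ℝ)| * δ + δ := by
          refine le_trans (norm_add_le _ _) ?_
          gcongr
          · rw [CStarRing.norm_mul_mem_unitary _ (hWmem (-1))]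
            exact ih
          · rw [norm_smul, hηzabs _, one_mul,
              CStarRing.norm_mem_unitary_mul _ (hWmem (-(i : ℤ)))]
            exact hstepneg
        refine le_trans hb ?_
        have h1 : |((-(i : ℤ) : ℤ) : ℝ)| = (i : ℝ) := by
          push_cast; rw [abs_neg]; exact abs_of_nonneg (Nat.cast_nonneg i)
        have h2 : |((-(i : ℤ) - 1 : ℤ) : ℝ)| = (i : ℝ) + 1 := by
          push_cast
          rw [show -(i : ℝ) - 1 = -((i : ℝ) + 1) by ring, abs_neg]
          exact abs_of_nonneg (by positivity)
        rw [h1, h2]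
        nlinarith [hδ0]
  -- inner product of ket with itself is 1
  have hinner_ket : (inner (𝕜 := ℂ) ket ket : ℂ) = 1 := by
    have h1 : (inner (𝕜 := ℂ) ket ket : ℂ)
        = dotProduct (star ((W j).mulVec ψ)) ((W j).mulVec ψ) := by
      rw [EuclideanSpace.inner_eq_star_dotProduct, dotProduct_comm, hket]
    rw [h1, Matrix.star_mulVec, Matrix.dotProduct_mulVec, Matrix.vecMul_vecMul,
      ← Matrix.star_eq_conjTranspose, (hWmem j).1, Matrix.vecMul_one]
    have h2 : dotProduct (star ψ) ψ = (inner (𝕜 := ℂ) ψ ψ : ℂ) := by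
      rw [EuclideanSpace.inner_eq_star_dotProduct, dotProduct_comm]
    rw [h2, inner_self_eq_norm_sq_to_K, hψ]
    norm_num
  have hket_norm : ‖ket‖ = 1 := by
    rw [@norm_eq_sqrt_re_inner ℂ _ _ _ _ ket, hinner_ket]
    simp
  -- the error matrix
  set Err : Matrix (Fin n) (Fin n) ℂ :=
    (u : Matrix (Fin n) (Fin n) ℂ) * W j - (η ^ j) • (W j * u) with hErr
  -- the difference as an inner product
  have hvec0 : Err.mulVec ψ =
      (u : Matrix (Fin n) (Fin n) ℂ).mulVec ((W j).mulVec ψ) -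
        (η ^ j) • ((W j).mulVec ψ) := by
    rw [hErr, Matrix.sub_mulVec, Matrix.smul_mulVec, ← Matrix.mulVec_mulVec,
      ← Matrix.mulVec_mulVec, hfix]
  have h3 : ((EuclideanSpace.equiv (Fin n) ℂ).symm (Err.mulVec ψ) : EuclideanSpace ℂ (Fin n))
      = (EuclideanSpace.equiv (Fin n) ℂ).symm
          ((u : Matrix (Fin n) (Fin n) ℂ).mulVec ket) - (η ^ j) • ket := by
    ext i
    simpa [hket] using congrFun hvec0 i
  have hexp' : expval = inner (𝕜 := ℂ) ket ((EuclideanSpace.equiv (Fin n) ℂ).symm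
      ((u : Matrix (Fin n) (Fin n) ℂ).mulVec ket)) := hexp
  have hdiff : expval - η ^ j = inner (𝕜 := ℂ) ket
      ((EuclideanSpace.equiv (Fin n) ℂ).symm (Err.mulVec ψ)) := by
    rw [h3, inner_sub_right, inner_smul_right, hinner_ket, mul_one, hexp']
  rw [hdiff]
  calc ‖inner (𝕜 := ℂ) ket ((EuclideanSpace.equiv (Fin n) ℂ).symm (Err.mulVec ψ))‖
      ≤ ‖ket‖ * ‖(EuclideanSpace.equiv (Fin n) ℂ).symm (Err.mulVec ψ)‖ :=
        norm_inner_le_norm _ _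
    _ ≤ 1 * (‖Err‖ * ‖ψ‖) := by
        rw [hket_norm]
        gcongr
        exact Matrix.l2_opNorm_mulVec _ _
    _ ≤ |(j : ℝ)| * δ := by
        rw [hψ, one_mul, mul_one]
        exact key j
end

section
/- Let $u$ be a unitary on a finite-dimensional Hilbert space and $|x\rangle$ a unit vector with $|\langle x|u|x\rangle - e^{i\theta}| \leq \zeta$ for some $\zeta \in [0,1]$. Then $u$ has an eigenvalue $e^{i\phi}$ with $|\phi - \theta| \leq \cos^{-1}(1-\zeta)$ (for suitable representatives of the angles). -/
open scoped Matrix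

/-- Existence of eigenvalues: if a unit vector `x` has expectation value with a unitary
`u` within `ζ` of `e^{iθ}`, then `u` has an eigenvalue `e^{iφ}` with
`|φ - θ| ≤ arccos (1 - ζ)`. -/
theorem stmt_9 (n : ℕ) (u : Matrix.unitaryGroup (Fin n) ℂ)
    (x : EuclideanSpace ℂ (Fin n)) (hx : ‖x‖ = 1)
    (θ ζ : ℝ) (hζ : ζ ∈ Set.Icc (0:ℝ) 1)
    (hexp : ‖
        (inner (𝕜 := ℂ) x
            ((WithLp.toLp 2 ((u : Matrix (Fin n) (Fin n) ℂ).mulVec x) : EuclideanSpace ℂ (Fin n))) -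
          Complex.exp (Complex.I * θ))‖ ≤ ζ) :
    ∃ φ : ℝ,
      Module.End.HasEigenvalue (u : Matrix (Fin n) (Fin n) ℂ).mulVecLin
          (Complex.exp (Complex.I * φ)) ∧
        |φ - θ| ≤ Real.arccos (1 - ζ) := by
  classical
  set M : Matrix (Fin n) (Fin n) ℂ := (u : Matrix (Fin n) (Fin n) ℂ) with hM
  set U : EuclideanSpace ℂ (Fin n) →ₗ[ℂ] EuclideanSpace ℂ (Fin n) := Matrix.toEuclideanLin M with hUdef
  set c : ℂ := Complex.exp (-(Complex.I * θ)) with hc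
  have hcθ : c * Complex.exp (Complex.I * θ) = 1 := by
    rw [hc, ← Complex.exp_add]; simp
  have hc_abs : ‖c‖ = 1 := by
    rw [hc, Complex.norm_exp]; simp
  have hxne : x ≠ 0 := by
    intro h; rw [h, norm_zero] at hx; norm_num at hx
  have : Nontrivial (EuclideanSpace ℂ (Fin n)) := nontrivial_of_ne x 0 hxne
  -- adjoint facts
  have hadj : Matrix.toEuclideanLin Mᴴ = LinearMap.adjoint U :=
    Matrix.toEuclideanLin_conjTranspose_eq_adjoint M
  have hMstar : Mᴴ * M = 1 := by
    have := u.2.1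
    rwa [Matrix.star_eq_conjTranspose] at this
  have hMstar' : M * Mᴴ = 1 := by
    have := u.2.2
    rwa [Matrix.star_eq_conjTranspose] at this
  have hUadjU : ∀ v : EuclideanSpace ℂ (Fin n), LinearMap.adjoint U (U v) = v := by
    intro v
    rw [← hadj]
    show Matrix.toEuclideanLin Mᴴ (Matrix.toEuclideanLin M v) = v
    simp [Matrix.toEuclideanLin_apply, Matrix.mulVec_mulVec, hMstar]
  have hUUadj : ∀ v : EuclideanSpace ℂ (Fin n), U (LinearMap.adjoint U v) = v := by
    intro v
    rw [← hadj]
    show Matrix.toEuclideanLin M (Matrix.toEuclideanLin Mᴴ v) = v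
    simp [Matrix.toEuclideanLin_apply, Matrix.mulVec_mulVec, hMstar']
  set H : EuclideanSpace ℂ (Fin n) →ₗ[ℂ] EuclideanSpace ℂ (Fin n) := c • U + (starRingEnd ℂ c) • LinearMap.adjoint U with hHdef
  have hH : LinearMap.IsSymmetric H := by
    intro v w
    simp only [hHdef, LinearMap.add_apply, LinearMap.smul_apply, inner_add_left,
      inner_add_right, inner_smul_left, inner_smul_right,
      LinearMap.adjoint_inner_left, LinearMap.adjoint_inner_right,
      RingHom.id_apply, starRingEnd_self_apply]
    ring
  -- Rayleigh bound
  set f : {v : EuclideanSpace ℂ (Fin n) // v ≠ 0} → ℝ :=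
    fun v => RCLike.re (inner (𝕜 := ℂ) (H v) (v : EuclideanSpace ℂ (Fin n))) / ‖(v : EuclideanSpace ℂ (Fin n))‖ ^ 2 with hf
  have hbdd : BddAbove (Set.range f) := by
    refine ⟨‖LinearMap.toContinuousLinearMap H‖, ?_⟩
    rintro _ ⟨v, rfl⟩
    have hv : (0:ℝ) < ‖(v : EuclideanSpace ℂ (Fin n))‖ ^ 2 := by
      have : (0:ℝ) < ‖(v : EuclideanSpace ℂ (Fin n))‖ := norm_pos_iff.mpr v.2
      positivity
    rw [hf]
    rw [div_le_iff₀ hv]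
    calc RCLike.re (inner (𝕜 := ℂ) (H v) (v : EuclideanSpace ℂ (Fin n)))
        ≤ ‖(inner (𝕜 := ℂ) (H v) (v : EuclideanSpace ℂ (Fin n)))‖ := RCLike.re_le_norm _
      _ ≤ ‖H v‖ * ‖(v : EuclideanSpace ℂ (Fin n))‖ := norm_inner_le_norm _ _
      _ ≤ ‖LinearMap.toContinuousLinearMap H‖ * ‖(v : EuclideanSpace ℂ (Fin n))‖ * ‖(v : EuclideanSpace ℂ (Fin n))‖ := by
          have := (LinearMap.toContinuousLinearMap H).le_opNorm (v : EuclideanSpace ℂ (Fin n))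
          exact mul_le_mul_of_nonneg_right this (norm_nonneg _)
      _ = ‖LinearMap.toContinuousLinearMap H‖ * ‖(v : EuclideanSpace ℂ (Fin n))‖ ^ 2 := by ring
  set μ : ℝ := ⨆ v : {v : EuclideanSpace ℂ (Fin n) // v ≠ 0}, RCLike.re (inner (𝕜 := ℂ) (H v) (v : EuclideanSpace ℂ (Fin n))) / ‖(v : EuclideanSpace ℂ (Fin n))‖ ^ 2
    with hμ
  have hμeig : Module.End.HasEigenvalue H (μ : ℂ) :=
    hH.hasEigenvalue_iSup_of_finiteDimensional
  -- the expectation value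
  set z : ℂ := inner (𝕜 := ℂ) x (U x) with hz
  have hz_eq : z = inner (𝕜 := ℂ) x
      ((WithLp.toLp 2 ((u : Matrix (Fin n) (Fin n) ℂ).mulVec x) : EuclideanSpace ℂ (Fin n))) := rfl
  have hre_cz : 1 - ζ ≤ (c * z).re := by
    have h1 : ‖c * z - 1‖ ≤ ζ := by
      have : c * z - 1 = c * (z - Complex.exp (Complex.I * θ)) := by
        rw [mul_sub, hcθ]
      rw [this, norm_mul, hc_abs, one_mul, hz_eq]
      exact hexp
    have h2 : (1 : ℝ) - (c*z).re ≤ ‖c * z - 1‖ := by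
      have : (1 : ℝ) - (c*z).re = -((c * z - 1).re) := by simp
      rw [this]
      exact (neg_le_abs _).trans (Complex.abs_re_le_norm _)
    linarith
  have hμ_ge : 2 * (1 - ζ) ≤ μ := by
    have hfx : f ⟨x, hxne⟩ = 2 * (c * z).re := by
      have hinner : inner (𝕜 := ℂ) (H x) x = c * z + starRingEnd ℂ (c * z) := by
        simp only [hHdef, LinearMap.add_apply, LinearMap.smul_apply, inner_add_left,
          inner_smul_left, LinearMap.adjoint_inner_left]
        have h1 : inner (𝕜 := ℂ) (U x) x = starRingEnd ℂ z := by
          rw [hz, ← inner_conj_symm]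
        rw [h1, ← hz]
        simp only [starRingEnd_self_apply, map_mul]
        ring
      rw [hf]
      simp only [hinner, hx, RCLike.re_to_complex, Complex.add_re, Complex.conj_re,
        one_pow, div_one]
      ring
    have := le_ciSup hbdd ⟨x, hxne⟩
    rw [hfx] at this
    rw [hμ]
    linarith
  -- eigenspace of H is U-invariant
  set V := Module.End.eigenspace (H : Module.End ℂ (EuclideanSpace ℂ (Fin n))) (μ : ℂ) with hV
  have hUV : ∀ v ∈ V, U v ∈ V := by
    intro v hv
    rw [hV, Module.End.mem_eigenspace_iff] at hv ⊢
    have hcomm : H (U v) = U (H v) := by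
      simp only [hHdef, LinearMap.add_apply, LinearMap.smul_apply, map_add, map_smul]
      rw [hUadjU, hUUadj]
    rw [hcomm, hv, map_smul]
  have hVnt : Nontrivial V := Submodule.nontrivial_iff_ne_bot.mpr hμeig
  obtain ⟨lam, hlam⟩ := Module.End.exists_eigenvalue (U.restrict hUV : Module.End ℂ V)
  obtain ⟨w', hw'⟩ := hlam.exists_hasEigenvector
  set w : EuclideanSpace ℂ (Fin n) := (w' : EuclideanSpace ℂ (Fin n)) with hw
  have hw0 : w ≠ 0 := fun h => hw'.2 (Subtype.ext h)
  have hUw : U w = lam • w := by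
    have h2 := congrArg (Subtype.val) hw'.apply_eq_smul
    rw [LinearMap.restrict_coe_apply] at h2
    simpa using h2
  have hHw : H w = (μ : ℂ) • w := Module.End.mem_eigenspace_iff.mp w'.2
  have hww : inner (𝕜 := ℂ) w w ≠ 0 := by
    rw [inner_self_ne_zero]; exact hw0
  -- |lam| = 1
  have hlam_abs : ‖lam‖ = 1 := by
    have h1 : inner (𝕜 := ℂ) (U w) (U w) = inner (𝕜 := ℂ) w w := by
      rw [← LinearMap.adjoint_inner_right, hUadjU]
    rw [hUw, inner_smul_left, inner_smul_right] at h1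
    have h2 : (starRingEnd ℂ lam * lam) * inner (𝕜 := ℂ) w w = inner (𝕜 := ℂ) w w := by
      rw [mul_assoc]; exact h1
    have h3 : starRingEnd ℂ lam * lam = 1 :=
      mul_right_cancel₀ hww (by rw [h2, one_mul])
    have h4 : ‖lam‖ ^ 2 = 1 := by
      have := congrArg (‖·‖) h3
      rwa [norm_mul, norm_one, Complex.norm_conj, ← sq] at this
    nlinarith [norm_nonneg lam]
  -- re (c * lam) = μ / 2
  have hre_clam : 1 - ζ ≤ (c * lam).re := by
    have h1 : inner (𝕜 := ℂ) w (H w) = (μ : ℂ) * inner (𝕜 := ℂ) w w := by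
      rw [hHw, inner_smul_right]
    have h2 : inner (𝕜 := ℂ) w (H w)
        = (c * lam + starRingEnd ℂ (c * lam)) * inner (𝕜 := ℂ) w w := by
      simp only [hHdef, LinearMap.add_apply, LinearMap.smul_apply, inner_add_right,
        inner_smul_right, LinearMap.adjoint_inner_right, hUw, inner_smul_left,
        inner_smul_right]
      simp only [map_mul]
      ring
    rw [h1] at h2
    have h3 : (μ : ℂ) = c * lam + starRingEnd ℂ (c * lam) :=
      mul_right_cancel₀ hww h2
    have h4 : μ = 2 * (c * lam).re := by
      have h5 := congrArg Complex.re h3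
      simp only [Complex.ofReal_re, Complex.add_re, Complex.conj_re] at h5
      linarith
    linarith [hμ_ge]
  -- define δ and φ
  set δ : ℝ := Complex.arg (c * lam) with hδ
  have hclam_abs : ‖c * lam‖ = 1 := by
    rw [norm_mul, hc_abs, hlam_abs, one_mul]
  have hclam_ne : c * lam ≠ 0 := by
    intro h; rw [h] at hclam_abs; simp at hclam_abs
  have hcos : Real.cos δ = (c * lam).re := by
    rw [hδ, Complex.cos_arg hclam_ne, hclam_abs, div_one]
  have hexpδ : Complex.exp (Complex.I * δ) = c * lam := by
    have := Complex.norm_mul_exp_arg_mul_I (c * lam)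
    rw [hclam_abs, Complex.ofReal_one, one_mul] at this
    rw [mul_comm]
    exact this
  refine ⟨θ + δ, ?_, ?_⟩
  · -- eigenvalue
    have hexpφ : Complex.exp (Complex.I * (((θ + δ : ℝ)) : ℂ)) = lam := by
      push_cast
      rw [mul_add, Complex.exp_add, hexpδ, ← mul_assoc, mul_comm (Complex.exp _) c, hcθ,
        one_mul]
    rw [hexpφ]
    apply Module.End.hasEigenvalue_of_hasEigenvector (x := WithLp.ofLp w)
    constructor
    · rw [Module.End.mem_eigenspace_iff]
      show M.mulVec (WithLp.ofLp w) = lam • WithLp.ofLp w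
      exact congrArg WithLp.ofLp hUw
    · exact fun h => hw0 (by simpa using congrArg (WithLp.toLp 2) h)
  · -- angle bound
    have h1 : |δ| ≤ Real.pi := abs_le.mpr ⟨(Complex.neg_pi_lt_arg _).le, Complex.arg_le_pi _⟩
    have h2 : Real.cos |δ| = Real.cos δ := Real.cos_abs δ
    have h3 : |δ| = Real.arccos (Real.cos |δ|) :=
      (Real.arccos_cos (abs_nonneg _) h1).symm
    have h4 : |δ| ≤ Real.arccos (1 - ζ) := by
      by_contra hcon
      push_neg at hcon
      have hmem1 : Real.arccos (1 - ζ) ∈ Set.Icc 0 Real.pi :=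
        ⟨Real.arccos_nonneg _, Real.arccos_le_pi _⟩
      have hmem2 : |δ| ∈ Set.Icc 0 Real.pi := ⟨abs_nonneg _, h1⟩
      have := Real.strictAntiOn_cos hmem1 hmem2 hcon
      rw [Real.cos_arccos (by linarith [hζ.2]) (by linarith [hζ.1]), h2, hcos] at this
      linarith
    have h5 : |θ + δ - θ| = |δ| := by
      congr 1; ring
    rw [h5]; exact h4
end

section
/- Let $u, v$ be unitary $g \times g$ matrices and $\alpha \in [0,1)$. Then $\|uv - e^{2\pi i\alpha} vu\|_F \geq 2\sqrt{g}\,\sin\left(\pi \left|\frac{\lfloor g\alpha\rceil - g\alpha}{g}\right|\right)$, where $\|\cdot\|_F$ is the Frobenius norm and $\lfloor \cdot \rceil$ denotes rounding to the nearest integer. -/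
open scoped Matrix
open Real Matrix Polynomial Finset

/-- The Frobenius norm `‖M‖_F = √(Tr MᴴM) = √(∑ |M i j|²)`. -/
noncomputable def frobeniusNorm {g : ℕ} (M : Matrix (Fin g) (Fin g) ℂ) : ℝ :=
  Real.sqrt (∑ i, ∑ j, ‖M i j‖ ^ 2)

lemma pair_cos {a b m : ℝ} (hb : 0 ≤ b) (hbm : b ≤ m) (hma : m ≤ a) (hab : a + b ≤ π) :
    Real.cos a + Real.cos b ≤ Real.cos m + Real.cos (a + b - m) := by
  rw [Real.cos_add_cos a b, Real.cos_add_cos m (a + b - m)]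
  have h1 : (m + (a + b - m)) / 2 = (a + b) / 2 := by ring
  rw [h1]
  have hpi := Real.pi_pos
  have hcos0 : 0 ≤ Real.cos ((a + b) / 2) :=
    Real.cos_nonneg_of_mem_Icc ⟨by linarith, by linarith⟩
  have key : Real.cos ((a - b) / 2) ≤ Real.cos ((m - (a + b - m)) / 2) := by
    rw [← Real.cos_abs ((m - (a+b-m))/2)]
    apply Real.cos_le_cos_of_nonneg_of_le_pi (abs_nonneg _) (by linarith)
    rw [abs_div, abs_of_nonneg (by norm_num : (0:ℝ) ≤ (2:ℝ))]
    apply div_le_div_of_nonneg_right ?_ (by norm_num)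
    rw [abs_le]; constructor <;> linarith
  nlinarith [Real.cos_le_one ((a-b)/2)]


lemma jensen_cos {g : ℕ} (hg : 0 < g) (b : Fin g → ℝ)
    (h1 : ∀ j, 0 ≤ b j) (h2 : ∀ j, b j ≤ π / 2) :
    ∑ j, Real.cos (b j) ≤ g * Real.cos ((∑ j, b j) / g) := by
  have hpi := Real.pi_pos
  have hgR : (0:ℝ) < g := by exact_mod_cast hg
  have := (strictConcaveOn_cos_Icc.concaveOn).le_map_sum
    (t := Finset.univ) (w := fun _ : Fin g => (1:ℝ) / (g:ℝ)) (p := b)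
    (fun i _ => by positivity)
    (by simp [Finset.sum_const, Finset.card_univ]; field_simp)
    (fun i _ => ⟨by linarith [h1 i], h2 i⟩)
  simp only [smul_eq_mul] at this
  rw [← Finset.mul_sum, ← Finset.mul_sum] at this
  have e : 1 / (g:ℝ) * ∑ j, b j = (∑ j, b j) / g := by ring
  rw [e] at this
  calc ∑ j, Real.cos (b j) = g * (1/(g:ℝ) * ∑ j, Real.cos (b j)) := by field_simp
    _ ≤ g * Real.cos ((∑ j, b j)/g) := by
        apply mul_le_mul_of_nonneg_left this hgR.le


lemma sum_cos_le {g : ℕ} (b : Fin g → ℝ)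
    (h1 : ∀ j, 0 ≤ b j) (hs : ∑ j, b j ≤ π) :
    ∑ j, Real.cos (b j) ≤ g * Real.cos ((∑ j, b j) / g) := by
  have hpi := Real.pi_pos
  rcases Nat.eq_zero_or_pos g with hg | hg
  · subst hg; simp
  by_cases hall : ∀ j, b j ≤ π / 2
  · exact jensen_cos hg b h1 hall
  push_neg at hall
  obtain ⟨k, hk⟩ := hall
  have hpair : ∀ j, j ≠ k → b j + b k ≤ ∑ i, b i := by
    intro j hj
    calc b j + b k = ∑ i ∈ ({j, k} : Finset (Fin g)), b i := by
          rw [Finset.sum_pair hj]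
      _ ≤ ∑ i, b i := Finset.sum_le_sum_of_subset_of_nonneg (subset_univ _) (fun i _ _ => h1 i)
  have hother : ∀ j, j ≠ k → b j ≤ π / 2 := by
    intro j hj
    by_contra h
    push_neg at h
    have := hpair j hj
    linarith
  rcases Nat.lt_or_ge g 2 with hg2 | hg2
  · interval_cases g
    have huniv : (Finset.univ : Finset (Fin 1)) = {k} :=
      Finset.eq_singleton_iff_unique_mem.2 ⟨mem_univ _, fun x _ => Subsingleton.elim x k⟩
    rw [huniv]
    simp
  haveI : Nontrivial (Fin g) := Fin.nontrivial_iff_two_le.mpr hg2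
  obtain ⟨j0, hj0⟩ := exists_ne k
  have hj0' : j0 ∈ univ \ ({k} : Finset (Fin g)) := by simp [hj0]
  set b' : Fin g → ℝ :=
    Function.update (Function.update b j0 (π/2)) k (b k + b j0 - π/2) with hb'
  have hbk' : b' k = b k + b j0 - π/2 := by simp [hb']
  have hbj0' : b' j0 = π/2 := by
    simp [hb', Function.update_of_ne hj0]
  have hbother : ∀ j, j ≠ k → j ≠ j0 → b' j = b j := by
    intro j h1' h2'
    simp [hb', Function.update_of_ne h1', Function.update_of_ne h2']
  -- generic sum splitting
  have hsplit : ∀ f : Fin g → ℝ,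
      ∑ j, f j = ∑ j ∈ (univ \ {k}) \ {j0}, f j + f j0 + f k := by
    intro f
    rw [Finset.sum_eq_sum_sdiff_singleton_add (mem_univ k) f,
      Finset.sum_eq_sum_sdiff_singleton_add hj0' f]
  have hsame : ∀ j ∈ (univ \ ({k} : Finset (Fin g))) \ {j0}, b' j = b j := by
    intro j hj
    simp only [Finset.mem_sdiff, Finset.mem_singleton] at hj
    exact hbother j hj.1.2 hj.2
  have hsum' : ∑ j, b' j = ∑ j, b j := by
    rw [hsplit b', hsplit b, Finset.sum_congr rfl hsame, hbk', hbj0']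
    ring
  have hmain : Real.cos (b k) + Real.cos (b j0) ≤ Real.cos (b' k) + Real.cos (b' j0) := by
    rw [hbk', hbj0']
    rw [add_comm (Real.cos (b k + b j0 - π/2))]
    have := pair_cos (h1 j0) (hother j0 hj0) hk.le (by linarith [hpair j0 hj0])
    linarith [this]
  have hcos' : ∑ j, Real.cos (b j) ≤ ∑ j, Real.cos (b' j) := by
    rw [hsplit (fun j => Real.cos (b j)), hsplit (fun j => Real.cos (b' j))]
    have : ∑ j ∈ (univ \ ({k} : Finset (Fin g))) \ {j0}, Real.cos (b j)
        = ∑ j ∈ (univ \ ({k} : Finset (Fin g))) \ {j0}, Real.cos (b' j) :=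
      Finset.sum_congr rfl (fun j hj => by rw [hsame j hj])
    rw [this]
    linarith [hmain]
  -- b' is within [0, π/2]
  have h1' : ∀ j, 0 ≤ b' j := by
    intro j
    rcases eq_or_ne j k with rfl | hjk
    · rw [hbk']; linarith [h1 j0]
    rcases eq_or_ne j j0 with rfl | hjj0
    · rw [hbj0']; linarith
    · rw [hbother j hjk hjj0]; exact h1 j
  have h2' : ∀ j, b' j ≤ π / 2 := by
    intro j
    rcases eq_or_ne j k with rfl | hjk
    · rw [hbk']; linarith [hpair j0 hj0]
    rcases eq_or_ne j j0 with rfl | hjj0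
    · rw [hbj0']
    · rw [hbother j hjk hjj0]; exact hother j hjk
  calc ∑ j, Real.cos (b j) ≤ ∑ j, Real.cos (b' j) := hcos'
    _ ≤ g * Real.cos ((∑ j, b' j) / g) := jensen_cos hg b' h1' h2'
    _ = g * Real.cos ((∑ j, b j) / g) := by rw [hsum']


lemma sum_cos_le' {g : ℕ} (b : Fin g → ℝ)
    (h1 : ∀ j, 0 ≤ b j) (h2 : ∀ j, b j ≤ π) {s : ℝ}
    (hs0 : 0 ≤ s) (hsπ : s ≤ π) (hles : s ≤ ∑ j, b j) :
    ∑ j, Real.cos (b j) ≤ g * Real.cos (s / g) := by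
  have hgR : (0:ℝ) ≤ g := Nat.cast_nonneg g
  rcases eq_or_lt_of_le (Finset.sum_nonneg (fun j _ => h1 j)) with hT | hT
  · -- sum = 0, hence s = 0
    have hs : s = 0 := le_antisymm (hles.trans hT.symm.le) hs0
    subst hs
    simp only [zero_div, Real.cos_zero, mul_one]
    calc ∑ j, Real.cos (b j) ≤ ∑ _j : Fin g, (1:ℝ) :=
          Finset.sum_le_sum (fun j _ => Real.cos_le_one _)
      _ = g := by simp
  · set T := ∑ j, b j with hTdef
    set c : Fin g → ℝ := fun j => (s / T) * b j with hc
    have hfrac0 : 0 ≤ s / T := div_nonneg hs0 hT.le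
    have hfrac1 : s / T ≤ 1 := (div_le_one hT).2 hles
    have hc1 : ∀ j, 0 ≤ c j := fun j => mul_nonneg hfrac0 (h1 j)
    have hcle : ∀ j, c j ≤ b j := fun j => by
      calc c j = (s/T) * b j := rfl
        _ ≤ 1 * b j := mul_le_mul_of_nonneg_right hfrac1 (h1 j)
        _ = b j := one_mul _
    have hsumc : ∑ j, c j = s := by
      rw [hc, ← Finset.mul_sum, ← hTdef]
      field_simp
    have hmono : ∀ j, Real.cos (b j) ≤ Real.cos (c j) := fun j =>
      Real.cos_le_cos_of_nonneg_of_le_pi (hc1 j) (h2 j) (hcle j)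
    calc ∑ j, Real.cos (b j) ≤ ∑ j, Real.cos (c j) := Finset.sum_le_sum (fun j _ => hmono j)
      _ ≤ g * Real.cos ((∑ j, c j) / g) := sum_cos_le c hc1 (by rw [hsumc]; exact hsπ)
      _ = g * Real.cos (s / g) := by rw [hsumc]


lemma charpoly_root_abs_one {g : ℕ} {W : Matrix (Fin g) (Fin g) ℂ}
    (hW : W ∈ Matrix.unitaryGroup (Fin g) ℂ) {μ : ℂ}
    (hμ : W.charpoly.IsRoot μ) : ‖μ‖ = 1 := by
  have heval : W.charpoly.eval μ = (Matrix.scalar (Fin g) μ - W).det := by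
    rw [Matrix.charpoly, eval_det, matPolyEquiv_charmatrix]
    simp
  have hdet : (Matrix.scalar (Fin g) μ - W).det = 0 := by
    rw [← heval]; exact hμ
  obtain ⟨x, hx0, hx⟩ := (Matrix.exists_mulVec_eq_zero_iff).2 hdet
  have h2 : (Matrix.scalar (Fin g) μ) *ᵥ x = μ • x := by
    ext i
    simp [Matrix.mulVec_diagonal, Pi.algebraMap_apply]
  have hWx : W *ᵥ x = μ • x := by
    rw [Matrix.sub_mulVec, h2, sub_eq_zero] at hx
    exact hx.symm
  have key : dotProduct (star (W *ᵥ x)) (W *ᵥ x) = dotProduct (star x) x := by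
    rw [Matrix.star_mulVec, ← Matrix.dotProduct_mulVec, Matrix.mulVec_mulVec]
    have h1 : Wᴴ * W = 1 := hW.1
    rw [h1, Matrix.one_mulVec]
  rw [hWx] at key
  have hsum : ∀ v : Fin g → ℂ,
      dotProduct (star v) v = ((∑ i, ‖v i‖^2 : ℝ) : ℂ) := by
    intro v
    rw [Complex.ofReal_sum]
    simp only [dotProduct, Pi.star_apply, Complex.star_def]
    refine Finset.sum_congr rfl fun i _ => ?_
    rw [Complex.sq_norm, Complex.normSq_eq_conj_mul_self]
  rw [hsum, hsum] at key
  have keyR : (∑ i, ‖(μ • x) i‖^2) = ∑ i, ‖x i‖^2 :=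
    Complex.ofReal_inj.1 key
  have hxs : ∀ i, ‖(μ • x) i‖^2 = ‖μ‖ ^2 * ‖x i‖^2 := by
    intro i
    simp [mul_pow]
  rw [Finset.sum_congr rfl (fun i _ => hxs i), ← Finset.mul_sum] at keyR
  have hS : 0 < ∑ i, ‖x i‖^2 := by
    have hne : ∃ i, x i ≠ 0 := by
      by_contra h
      push_neg at h
      exact hx0 (funext h)
    obtain ⟨i, hi⟩ := hne
    have : 0 < ‖x i‖^2 := pow_pos (norm_pos_iff.mpr hi) 2
    have hnn : ∀ j ∈ Finset.univ, (0:ℝ) ≤ ‖x j‖^2 := fun j _ => by positivity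
    calc (0:ℝ) < ‖x i‖^2 := this
      _ ≤ ∑ j, ‖x j‖^2 := Finset.single_le_sum hnn (Finset.mem_univ i)
  have habs2 : ‖μ‖ ^ 2 = 1 := by
    have := mul_right_cancel₀ hS.ne' (keyR.trans (one_mul _).symm)
    exact this
  nlinarith [norm_nonneg μ]


lemma trace_bound {g : ℕ} {W : Matrix (Fin g) (Fin g) ℂ}
    (hW : W ∈ Matrix.unitaryGroup (Fin g) ℂ) (hdet : W.det = 1) (α : ℝ) :
    (Complex.exp (2 * Real.pi * Complex.I * α) * W.trace).re
      ≤ g * Real.cos (2 * Real.pi * |(round ((g:ℝ) * α) : ℝ) - (g:ℝ) * α| / g) := by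
  set c : ℂ := Complex.exp (2 * Real.pi * Complex.I * α) with hcdef
  set d : ℝ := |(round ((g:ℝ) * α) : ℝ) - (g:ℝ) * α| with hddef
  have hd0 : 0 ≤ d := abs_nonneg _
  have hdhalf : d ≤ 1/2 := by
    rw [hddef, abs_sub_comm]
    exact abs_sub_round _
  have hpi := Real.pi_pos
  have hcabs : ‖c‖ = 1 := by
    rw [hcdef, Complex.norm_exp]
    have : (2 * (Real.pi:ℂ) * Complex.I * α).re = 0 := by simp
    rw [this, Real.exp_zero]
  -- roots of charpoly
  set p : Polynomial ℂ := W.charpoly with hpdef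
  have hpmonic : p.Monic := W.charpoly_monic
  have hpdeg : p.natDegree = g := by
    rw [hpdef, Matrix.charpoly_natDegree_eq_dim, Fintype.card_fin]
  have hcard : p.roots.card = g := by
    have := (IsAlgClosed.splits (k := ℂ) p).natDegree_eq_card_roots.symm
    rwa [hpdeg] at this
  set l : List ℂ := p.roots.toList with hldef
  have hl : l.length = g := by rw [hldef, Multiset.length_toList, hcard]
  set lam : Fin g → ℂ := fun i => l.get (Fin.cast hl.symm i) with hlam
  have hgen : ∀ {M : Type} [AddCommMonoid M] (f : ℂ → M),
      ∑ j, f (lam j) = (p.roots.map f).sum := by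
    intro M _ f
    have h1 : ∑ j : Fin g, f (lam j) = ∑ i : Fin l.length, f (l.get i) :=
      Fintype.sum_equiv (finCongr hl.symm) _ _ (fun j => rfl)
    rw [h1]
    have h2 : ∑ i : Fin l.length, f (l.get i) = (l.map f).sum := by
      rw [← Fin.sum_univ_fun_getElem l f]
      rfl
    rw [h2, ← Multiset.sum_coe, ← Multiset.map_coe, hldef, Multiset.coe_toList]
  have hgenp : ∀ (f : ℂ → ℂ), ∏ j, f (lam j) = (p.roots.map f).prod := by
    intro f
    have h1 : ∏ j : Fin g, f (lam j) = ∏ i : Fin l.length, f (l.get i) :=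
      Fintype.prod_equiv (finCongr hl.symm) _ _ (fun j => rfl)
    rw [h1]
    have h2 : ∏ i : Fin l.length, f (l.get i) = (l.map f).prod := by
      rw [← Fin.prod_univ_fun_getElem l f]
      rfl
    rw [h2, ← Multiset.prod_coe, ← Multiset.map_coe, hldef, Multiset.coe_toList]
  have hmem : ∀ j, lam j ∈ p.roots := by
    intro j
    have h1 : lam j ∈ l := List.get_mem l _
    exact Multiset.mem_toList.mp h1
  have habs : ∀ j, ‖lam j‖ = 1 := by
    intro j
    have hr := (Polynomial.mem_roots (hpmonic.ne_zero)).1 (hmem j)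
    exact charpoly_root_abs_one hW hr
  have htrace : W.trace = ∑ j, lam j := by
    rw [Matrix.trace_eq_sum_roots_charpoly]
    have := hgen (M := ℂ) id
    rw [Multiset.map_id] at this
    exact this.symm
  have hprod : ∏ j, lam j = 1 := by
    rw [← hdet, Matrix.det_eq_prod_roots_charpoly]
    have := hgenp id
    rw [Multiset.map_id] at this
    exact this
  set ψ : Fin g → ℝ := fun j => Complex.arg (c * lam j) with hψ
  have habsc : ∀ j, ‖c * lam j‖ = 1 := by
    intro j
    rw [norm_mul, hcabs, habs j, one_mul]
  have hre : (c * W.trace).re = ∑ j, Real.cos (ψ j) := by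
    rw [htrace, Finset.mul_sum, Complex.re_sum]
    refine Finset.sum_congr rfl fun j _ => ?_
    have hne : c * lam j ≠ 0 := by
      intro h
      have h2 := habsc j
      rw [h] at h2
      simpa using h2
    rw [Complex.cos_arg hne, habsc j, div_one]
  have hexp : ∃ n : ℤ, ∑ j, ψ j = 2 * Real.pi * ((g:ℝ) * α) + n * (2 * Real.pi) := by
    have h1 : Complex.exp ((∑ j, ψ j : ℝ) * Complex.I)
        = Complex.exp ((2 * Real.pi * ((g:ℝ) * α) : ℝ) * Complex.I) := by
      have e1 : ((∑ j, ψ j : ℝ) : ℂ) * Complex.I = ∑ j, (ψ j : ℂ) * Complex.I := by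
        rw [Complex.ofReal_sum, Finset.sum_mul]
      rw [e1, Complex.exp_sum]
      have e2 : ∀ j ∈ Finset.univ, Complex.exp ((ψ j : ℂ) * Complex.I) = c * lam j := by
        intro j _
        have h3 := Complex.norm_mul_exp_arg_mul_I (c * lam j)
        rw [habsc j] at h3
        simpa using h3
      rw [Finset.prod_congr rfl e2, Finset.prod_mul_distrib, hprod, mul_one,
        Finset.prod_const, Finset.card_univ, Fintype.card_fin, hcdef,
        ← Complex.exp_nat_mul]
      congr 1
      push_cast
      ring
    obtain ⟨n, hn⟩ := Complex.exp_eq_exp_iff_exists_int.1 h1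
    refine ⟨n, ?_⟩
    have := congrArg Complex.im hn
    simpa using this
  set a : Fin g → ℝ := fun j => |ψ j| with ha
  have ha0 : ∀ j, 0 ≤ a j := fun j => abs_nonneg _
  have haπ : ∀ j, a j ≤ π := fun j => Complex.abs_arg_le_pi _
  have hlow : 2 * Real.pi * d ≤ ∑ j, a j := by
    obtain ⟨n, hn⟩ := hexp
    have h1 : |∑ j, ψ j| ≤ ∑ j, a j := Finset.abs_sum_le_sum_abs _ _
    have h2 : (∑ j, ψ j) = 2 * Real.pi * ((g:ℝ) * α - ((-n : ℤ) : ℝ)) := by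
      rw [hn]
      push_cast
      ring
    have h3 : d ≤ |(g:ℝ) * α - ((-n : ℤ) : ℝ)| := by
      rw [hddef, abs_sub_comm]
      exact round_le ((g:ℝ) * α) (-n)
    calc 2 * Real.pi * d ≤ 2 * Real.pi * |(g:ℝ) * α - ((-n : ℤ) : ℝ)| := by nlinarith
      _ = |2 * Real.pi * ((g:ℝ) * α - ((-n : ℤ) : ℝ))| := by
          rw [abs_mul, abs_of_pos (by linarith : (0:ℝ) < 2 * Real.pi)]
      _ = |∑ j, ψ j| := by rw [h2]
      _ ≤ ∑ j, a j := h1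
  have hcos_eq : ∀ j, Real.cos (ψ j) = Real.cos (a j) := fun j => (Real.cos_abs _).symm
  rw [hre, Finset.sum_congr rfl (fun j _ => hcos_eq j)]
  exact sum_cos_le' a ha0 haπ (by positivity) (by nlinarith) hlow


lemma trace_conj_sq {g : ℕ} (M : Matrix (Fin g) (Fin g) ℂ) :
    ((Mᴴ * M).trace : ℂ) = ((∑ i, ∑ j, ‖M i j‖ ^ 2 : ℝ) : ℂ) := by
  rw [Matrix.trace]
  rw [Finset.sum_comm (s := Finset.univ) (t := Finset.univ)
    (f := fun i j => ‖M i j‖^2)]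
  rw [Complex.ofReal_sum]
  refine Finset.sum_congr rfl fun j _ => ?_
  rw [Complex.ofReal_sum, Matrix.diag_apply, Matrix.mul_apply]
  refine Finset.sum_congr rfl fun i _ => ?_
  rw [Matrix.conjTranspose_apply, Complex.sq_norm, Complex.normSq_eq_conj_mul_self]
  rfl

lemma frob_expand {g : ℕ} (A B : Matrix (Fin g) (Fin g) ℂ)
    (hA : Aᴴ * A = 1) (hB : Bᴴ * B = 1) (c : ℂ) (hc : ‖c‖ = 1) :
    (∑ i, ∑ j, ‖(A - c • B) i j‖ ^ 2)
      = 2 * g - 2 * (c * (Aᴴ * B).trace).re := by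
  have hcc : star c * c = 1 := by
    rw [Complex.star_def, mul_comm, Complex.mul_conj, Complex.normSq_eq_norm_sq, hc]
    norm_num
  set M := A - c • B with hM
  have hMex : Mᴴ * M = Aᴴ * A + (star c * c) • (Bᴴ * B)
      - (star c • (Bᴴ * A) + c • (Aᴴ * B)) := by
    rw [hM, conjTranspose_sub, conjTranspose_smul]
    simp only [sub_mul, mul_sub, smul_mul_assoc, mul_smul_comm, smul_smul, smul_sub,
      mul_comm c (star c)]
    abel
  have htr : (Mᴴ * M).trace
      = (2 * g : ℝ) - (c * (Aᴴ * B).trace + star (c * (Aᴴ * B).trace)) := by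
    rw [hMex]
    simp only [Matrix.trace_sub, Matrix.trace_add, Matrix.trace_smul, hA, hB,
      Matrix.trace_one, hcc]
    have h2 : (Bᴴ * A).trace = star ((Aᴴ * B).trace) := by
      rw [← Matrix.trace_conjTranspose, Matrix.conjTranspose_mul,
        Matrix.conjTranspose_conjTranspose]
    rw [h2]
    simp only [smul_eq_mul, star_mul', Fintype.card_fin]
    push_cast
    ring
  have key := (trace_conj_sq M).symm.trans htr
  have hre := congrArg Complex.re key
  simp only [Complex.sub_re, Complex.add_re, Complex.conj_re, Complex.ofReal_re,
    Complex.mul_re] at hre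
  push_cast at hre ⊢
  rw [hre]
  simp [Complex.mul_re]
  ring


lemma W_unitary {g : ℕ} (U V : Matrix (Fin g) (Fin g) ℂ)
    (hU1 : Uᴴ * U = 1) (hU2 : U * Uᴴ = 1) (hV1 : Vᴴ * V = 1) (hV2 : V * Vᴴ = 1) :
    ((U * V)ᴴ * (V * U)) ∈ Matrix.unitaryGroup (Fin g) ℂ := by
  have hA1 : (U*V)ᴴ * (U*V) = 1 := by
    rw [conjTranspose_mul, Matrix.mul_assoc, ← Matrix.mul_assoc Uᴴ, hU1, Matrix.one_mul, hV1]
  have hB2 : (V*U) * (V*U)ᴴ = 1 := by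
    rw [conjTranspose_mul, Matrix.mul_assoc, ← Matrix.mul_assoc U, hU2, Matrix.one_mul, hV2]
  rw [Matrix.mem_unitaryGroup_iff]
  show ((U * V)ᴴ * (V * U)) * star ((U * V)ᴴ * (V * U)) = 1
  rw [Matrix.star_eq_conjTranspose,
    show ((U * V)ᴴ * (V * U))ᴴ = (V*U)ᴴ * (U*V) by
      rw [conjTranspose_mul ((U*V)ᴴ) (V*U), conjTranspose_conjTranspose],
    Matrix.mul_assoc, ← Matrix.mul_assoc (V*U), hB2, Matrix.one_mul, hA1]

lemma W_det {g : ℕ} (U V : Matrix (Fin g) (Fin g) ℂ)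
    (hU1 : Uᴴ * U = 1) (hV1 : Vᴴ * V = 1) :
    ((U * V)ᴴ * (V * U)).det = 1 := by
  have hdU : star U.det * U.det = 1 := by
    have h := congrArg Matrix.det hU1
    rwa [Matrix.det_mul, Matrix.det_conjTranspose, Matrix.det_one] at h
  have hdV : star V.det * V.det = 1 := by
    have h := congrArg Matrix.det hV1
    rwa [Matrix.det_mul, Matrix.det_conjTranspose, Matrix.det_one] at h
  rw [Matrix.det_mul, Matrix.det_conjTranspose, Matrix.det_mul, Matrix.det_mul]
  calc star (U.det * V.det) * (V.det * U.det)
      = (star U.det * U.det) * (star V.det * V.det) := by rw [star_mul']; ring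
    _ = 1 := by rw [hdU, hdV, one_mul]

lemma mul_unitary {g : ℕ} (U V : Matrix (Fin g) (Fin g) ℂ)
    (hU1 : Uᴴ * U = 1) (hV1 : Vᴴ * V = 1) : (U * V)ᴴ * (U * V) = 1 := by
  rw [conjTranspose_mul, Matrix.mul_assoc, ← Matrix.mul_assoc Uᴴ, hU1, Matrix.one_mul, hV1]

set_option maxHeartbeats 1600000 in
/-- Minimum twisted commutation value in the Frobenius norm: for `g`-dimensional
unitaries `u, v` and `α ∈ [0,1)`,
`‖uv - e^{2πiα} vu‖_F ≥ 2√g sin(π |⌊gα⌉ - gα| / g)`. -/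
theorem stmt_13 (g : ℕ) (α : ℝ) (hα : α ∈ Set.Ico (0:ℝ) 1)
    (u v : Matrix.unitaryGroup (Fin g) ℂ) :
    2 * Real.sqrt g *
        Real.sin (Real.pi * |(round (g * α) : ℝ) - g * α| / g) ≤
      frobeniusNorm ((u : Matrix (Fin g) (Fin g) ℂ) * (v : Matrix (Fin g) (Fin g) ℂ) -
        Complex.exp (2 * Real.pi * Complex.I * α) •
          ((v : Matrix (Fin g) (Fin g) ℂ) * (u : Matrix (Fin g) (Fin g) ℂ))) := by
  have hpi := Real.pi_pos
  have hd0 : (0:ℝ) ≤ |(round ((g:ℝ) * α) : ℝ) - (g:ℝ) * α| := abs_nonneg _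
  have hdhalf : |(round ((g:ℝ) * α) : ℝ) - (g:ℝ) * α| ≤ 1/2 := by
    rw [abs_sub_comm]
    exact abs_sub_round _
  have hc : ‖Complex.exp (2 * Real.pi * Complex.I * α)‖ = 1 := by
    rw [Complex.norm_exp]
    have : (2 * (Real.pi:ℂ) * Complex.I * α).re = 0 := by simp
    rw [this, Real.exp_zero]
  have hu1 : (u : Matrix (Fin g) (Fin g) ℂ)ᴴ * u = 1 := u.2.1
  have hu2 : (u : Matrix (Fin g) (Fin g) ℂ) * (u : Matrix (Fin g) (Fin g) ℂ)ᴴ = 1 := u.2.2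
  have hv1 : (v : Matrix (Fin g) (Fin g) ℂ)ᴴ * v = 1 := v.2.1
  have hv2 : (v : Matrix (Fin g) (Fin g) ℂ) * (v : Matrix (Fin g) (Fin g) ℂ)ᴴ = 1 := v.2.2
  have hAu := mul_unitary _ _ hu1 hv1
  have hBu := mul_unitary _ _ hv1 hu1
  have hWu := W_unitary _ _ hu1 hu2 hv1 hv2
  have hdetW := W_det _ _ hu1 hv1
  have hfrob := frob_expand
    ((u : Matrix (Fin g) (Fin g) ℂ) * (v : Matrix (Fin g) (Fin g) ℂ))
    ((v : Matrix (Fin g) (Fin g) ℂ) * (u : Matrix (Fin g) (Fin g) ℂ))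
    hAu hBu _ hc
  have htb := trace_bound hWu hdetW α
  rcases Nat.eq_zero_or_pos g with rfl | hg
  · simp only [Nat.cast_zero, Real.sqrt_zero, mul_zero, zero_mul]
    exact Real.sqrt_nonneg _
  have hg1 : (1:ℝ) ≤ g := by exact_mod_cast hg
  have hgpos : (0:ℝ) < g := by linarith
  have harg0 : 0 ≤ Real.pi * |(round ((g:ℝ) * α) : ℝ) - (g:ℝ) * α| / g := by positivity
  have hargpi : Real.pi * |(round ((g:ℝ) * α) : ℝ) - (g:ℝ) * α| / g ≤ Real.pi := by
    rw [div_le_iff₀ hgpos]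
    nlinarith
  have hsin0 : 0 ≤ Real.sin (Real.pi * |(round ((g:ℝ) * α) : ℝ) - (g:ℝ) * α| / g) :=
    Real.sin_nonneg_of_nonneg_of_le_pi harg0 hargpi
  have hLHS0 : 0 ≤ 2 * Real.sqrt g *
      Real.sin (Real.pi * |(round ((g:ℝ) * α) : ℝ) - (g:ℝ) * α| / g) := by positivity
  have hcid : Real.cos (2 * Real.pi * |(round ((g:ℝ) * α) : ℝ) - (g:ℝ) * α| / g)
      = 1 - 2 * (Real.sin (Real.pi * |(round ((g:ℝ) * α) : ℝ) - (g:ℝ) * α| / g))^2 := by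
    have he : 2 * Real.pi * |(round ((g:ℝ) * α) : ℝ) - (g:ℝ) * α| / g
        = 2 * (Real.pi * |(round ((g:ℝ) * α) : ℝ) - (g:ℝ) * α| / g) := by ring
    rw [he, Real.cos_two_mul]
    have := Real.sin_sq_add_cos_sq
      (Real.pi * |(round ((g:ℝ) * α) : ℝ) - (g:ℝ) * α| / g)
    linarith
  have hsqrtg : (Real.sqrt g)^2 = g := Real.sq_sqrt (by positivity)
  have hkey : (2 * Real.sqrt g *
        Real.sin (Real.pi * |(round ((g:ℝ) * α) : ℝ) - (g:ℝ) * α| / g))^2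
      ≤ ∑ i, ∑ j, ‖((u : Matrix (Fin g) (Fin g) ℂ) * (v : Matrix (Fin g) (Fin g) ℂ) -
            Complex.exp (2 * Real.pi * Complex.I * α) •
              ((v : Matrix (Fin g) (Fin g) ℂ) * (u : Matrix (Fin g) (Fin g) ℂ))) i j‖ ^ 2 := by
    rw [hfrob]
    rw [hcid] at htb
    nlinarith [htb, hsqrtg, sq_nonneg
      (Real.sin (Real.pi * |(round ((g:ℝ) * α) : ℝ) - (g:ℝ) * α| / g))]
  rw [frobeniusNorm]
  calc 2 * Real.sqrt g * Real.sin (Real.pi * |(round ((g:ℝ) * α) : ℝ) - (g:ℝ) * α| / g)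
      = Real.sqrt ((2 * Real.sqrt g *
          Real.sin (Real.pi * |(round ((g:ℝ) * α) : ℝ) - (g:ℝ) * α| / g))^2) :=
        (Real.sqrt_sq hLHS0).symm
    _ ≤ _ := Real.sqrt_le_sqrt hkey
end
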